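/- arXiv:1801.01329 — 6 statements merged into one kernel-verified Lean document; each statement's English description precedes it below -/
import Mathlib

section
/- If a topological group G admits an unbounded lower semi-continuous invariant length function, then G fails topological bounded normal generation: there exists a non-trivial g ∈ G such that for every n ∈ ℕ the closure of (g^{±G})^{·n} is not all of G. -/
open Pointwise ENNReal

/-- The union of the conjugacy class of `g` and of the conjugacy class of `g⁻¹`. -/
def pmConj {G : Type*} [Group G] (g : G) : Set G :=
  {x | ∃ h : G, x = h * g * h⁻¹} ∪ {x | ∃ h : G, x = h * g⁻¹ * h⁻¹}

/-- A topological group admitting an unbounded lower semi-continuous invariant length function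
fails topological bounded normal generation. -/
theorem stmt_3 {G : Type*} [Group G] [TopologicalSpace G] [IsTopologicalGroup G]
    (l : G → ℝ≥0∞)
    (h_one : l 1 = 0)
    (h_inv : ∀ g : G, l g⁻¹ = l g)
    (h_mul : ∀ g h : G, l (g * h) ≤ l g + l h)
    (h_conj : ∀ g h : G, l (g * h * g⁻¹) = l h)
    (h_lsc : ∀ r : NNReal, IsClosed {g : G | l g ≤ (r : ℝ≥0∞)})
    (h_unbounded : ∀ K : ℕ, ∃ g : G, (K : ℝ≥0∞) < l g ∧ l g < ⊤) :
    ∃ g : G, g ≠ 1 ∧ ∀ n : ℕ, 1 ≤ n → closure (pmConj g ^ n) ≠ (Set.univ : Set G) := by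
  obtain ⟨g, hg0, hgt⟩ := h_unbounded 0
  have hg0' : l g ≠ 0 := by
    intro h; rw [h] at hg0; simp at hg0
  refine ⟨g, ?_, ?_⟩
  · intro h; rw [h, h_one] at hg0'; exact hg0' rfl
  intro n hn hcl
  -- every element of pmConj g has length l g
  have hmem : ∀ x ∈ pmConj g, l x = l g := by
    rintro x (⟨h, rfl⟩ | ⟨h, rfl⟩)
    · exact h_conj h g
    · rw [h_conj h g⁻¹, h_inv]
  -- products of n elements have length ≤ n * l g
  have hpow : ∀ m : ℕ, ∀ x ∈ pmConj g ^ m, l x ≤ m * l g := by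
    intro m
    induction m with
    | zero => intro x hx; rw [pow_zero] at hx; simp at hx; simp [hx, h_one]
    | succ k ih =>
      intro x hx
      rw [pow_succ] at hx
      obtain ⟨a, ha, b, hb, rfl⟩ := hx
      calc l (a * b) ≤ l a + l b := h_mul a b
        _ ≤ k * l g + l g := add_le_add (ih a ha) (le_of_eq (hmem b hb))
        _ = (k + 1 : ℕ) * l g := by push_cast; ring
  set r : NNReal := ((n : ℝ≥0∞) * l g).toNNReal with hr
  have hfin : (n : ℝ≥0∞) * l g ≠ ⊤ := by
    exact ENNReal.mul_ne_top (by simp) hgt.ne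
  have hrc : (r : ℝ≥0∞) = (n : ℝ≥0∞) * l g := ENNReal.coe_toNNReal hfin
  have hsub : pmConj g ^ n ⊆ {x : G | l x ≤ (r : ℝ≥0∞)} := by
    intro x hx; rw [Set.mem_setOf_eq, hrc]; exact hpow n x hx
  have hclosed := (h_lsc r).closure_subset_iff.mpr hsub
  obtain ⟨y, hy1, hy2⟩ := h_unbounded ⌈(r : ℝ)⌉₊
  have hy : y ∈ closure (pmConj g ^ n) := by rw [hcl]; trivial
  have hle : l y ≤ (r : ℝ≥0∞) := hclosed hy
  have : (r : ℝ≥0∞) ≤ (⌈(r : ℝ)⌉₊ : ℝ≥0∞) := by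
    rw [← ENNReal.coe_natCast, ENNReal.coe_le_coe]
    have := Nat.le_ceil (r : ℝ)
    exact_mod_cast this
  exact absurd (hle.trans this) (not_le.mpr hy1)
end

section
/- Let X be an infinite set. Then the symmetric group Sym(X) of all permutations of X, endowed with the topology of pointwise convergence (the subspace topology induced by the inclusion Sym(X) ⊆ X^X, where X carries the discrete topology), fails topological bounded normal generation: there exists a non-trivial g ∈ Sym(X) such that for every n ∈ ℕ the closure of (g^{±Sym(X)})^{·n} is not all of Sym(X). -/
open Pointwise

/-- Every element of `pmConj (swap a b)` moves at most the two points `h a, h b`. -/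
lemma pmConj_swap_support {X : Type*} [DecidableEq X] {a b : X}
    {σ : Equiv.Perm X} (hσ : σ ∈ pmConj (Equiv.swap a b)) :
    ∃ s : Finset X, s.card ≤ 2 ∧ ∀ x ∉ s, σ x = x := by
  have key : ∀ h : Equiv.Perm X, ∃ s : Finset X, s.card ≤ 2 ∧
      ∀ x ∉ s, (h * Equiv.swap a b * h⁻¹) x = x := by
    intro h
    refine ⟨{h a, h b}, (Finset.card_insert_le _ _).trans (by simp), fun x hx => ?_⟩
    simp only [Finset.mem_insert, Finset.mem_singleton] at hx
    push_neg at hx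
    have h1 : h⁻¹ x ≠ a := fun hc => hx.1 (by rw [← hc]; simp)
    have h2 : h⁻¹ x ≠ b := fun hc => hx.2 (by rw [← hc]; simp)
    rw [Equiv.Perm.mul_apply, Equiv.Perm.mul_apply, Equiv.swap_apply_of_ne_of_ne h1 h2]; simp
  rcases hσ with ⟨h, rfl⟩ | ⟨h, rfl⟩
  · exact key h
  · rw [Equiv.swap_inv]; exact key h

lemma pow_support {X : Type*} [DecidableEq X] {a b : X} (n : ℕ)
    {σ : Equiv.Perm X} (hσ : σ ∈ pmConj (Equiv.swap a b) ^ n) :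
    ∃ s : Finset X, s.card ≤ 2 * n ∧ ∀ x ∉ s, σ x = x := by
  induction n generalizing σ with
  | zero =>
    rw [pow_zero, Set.mem_one] at hσ
    exact ⟨∅, by simp, fun x _ => by rw [hσ]; rfl⟩
  | succ n ih =>
    rw [pow_succ, Set.mem_mul] at hσ
    obtain ⟨τ, hτ, ρ, hρ, rfl⟩ := hσ
    obtain ⟨s, hs, hsfix⟩ := ih hτ
    obtain ⟨t, ht, htfix⟩ := pmConj_swap_support hρ
    refine ⟨s ∪ t, ?_, fun x hx => ?_⟩
    · calc (s ∪ t).card ≤ s.card + t.card := Finset.card_union_le s t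
        _ ≤ 2 * n + 2 := by omega
        _ = 2 * (n + 1) := by ring
    · simp only [Finset.mem_union, not_or] at hx
      simp [Equiv.Perm.mul_apply, htfix x hx.2, hsfix x hx.1]

/-- The symmetric group of an infinite set, endowed with the topology of pointwise convergence
(induced from `X → X` with `X` discrete), fails topological bounded normal generation. -/
theorem stmt_5 {X : Type*} [Infinite X] :
    letI : TopologicalSpace X := ⊥
    letI : TopologicalSpace (Equiv.Perm X) :=
      TopologicalSpace.induced (fun g : Equiv.Perm X => (g : X → X)) Pi.topologicalSpace
    ∃ g : Equiv.Perm X, g ≠ 1 ∧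
      ∀ n : ℕ, 1 ≤ n → closure (pmConj g ^ n) ≠ (Set.univ : Set (Equiv.Perm X)) := by
  classical
  letI : TopologicalSpace X := ⊥
  letI : TopologicalSpace (Equiv.Perm X) :=
    TopologicalSpace.induced (fun g : Equiv.Perm X => (g : X → X)) Pi.topologicalSpace
  -- an embedding of ℤ into X
  obtain ⟨f⟩ : Nonempty (ℤ ↪ X) :=
    ⟨(Function.Embedding.mk _ (fun m n h => Encodable.encode_injective h)).trans
      (Infinite.natEmbedding X)⟩
  -- two distinct points
  set a : X := f 0 with ha
  set b : X := f 1 with hb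
  have hab : a ≠ b := fun h => by simpa using f.injective h
  refine ⟨Equiv.swap a b, fun h => hab (by
    have := congrArg (fun σ : Equiv.Perm X => σ a) h
    simpa [Equiv.swap_apply_left] using this.symm), ?_⟩
  intro n hn hclo
  -- the "infinitely supported" permutation
  set H : Equiv.Perm X := (Equiv.addRight (1 : ℤ)).viaEmbedding f with hH
  have hHf : ∀ m : ℤ, H (f m) = f (m + 1) := fun m =>
    Equiv.Perm.viaEmbedding_apply _ f m
  -- the finite set of 2n+1 points
  set F : Finset X := (Finset.range (2 * n + 1)).image (fun i : ℕ => f i) with hF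
  have hFcard : F.card = 2 * n + 1 := by
    rw [hF, Finset.card_image_of_injective _ (fun i j h => by
      exact_mod_cast f.injective h), Finset.card_range]
  -- the open neighborhood of H
  set U : Set (Equiv.Perm X) := {σ | ∀ x ∈ F, σ x = H x} with hU
  have hUopen : IsOpen U := by
    have : U = ⋂ x ∈ F, (fun σ : Equiv.Perm X => (σ : X → X)) ⁻¹'
        ((fun g : X → X => g x) ⁻¹' {H x}) := by
      ext σ; simp [hU]
    rw [this]
    refine isOpen_biInter_finset fun x _ => ?_
    letI : DiscreteTopology X := ⟨rfl⟩
    exact IsOpen.preimage continuous_induced_dom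
      (IsOpen.preimage (continuous_apply x) (isOpen_discrete _))
  have hHU : H ∈ U := fun x _ => rfl
  have := (mem_closure_iff.mp (hclo ▸ Set.mem_univ H)) U hUopen hHU
  obtain ⟨σ, hσU, hσA⟩ := this
  obtain ⟨s, hs, hsfix⟩ := pow_support (a := a) (b := b) n hσA
  -- F ⊆ s
  have hFs : F ⊆ s := by
    intro x hx
    by_contra hxs
    obtain ⟨i, _, rfl⟩ := Finset.mem_image.mp hx
    have h1 : σ (f i) = H (f i) := hσU _ hx
    have h2 : H (f i) = f (i + 1) := hHf i
    have h3 : σ (f i) = f i := hsfix _ hxs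
    have : (i : ℤ) + 1 = i := f.injective (by rw [← h2, ← h1, h3])
    omega
  have := Finset.card_le_card hFs
  omega
end

section
/- Let H be an infinite-dimensional separable complex Hilbert space, let U(H) be the group of unitary operators on H endowed with the strong operator topology (the topology of pointwise convergence on H), and let PU(H) be the projective unitary group, i.e. the quotient of U(H) by its center (the subgroup of unitary scalar multiples of the identity), endowed with the quotient topology. Then PU(H) fails topological bounded normal generation: there exists a non-trivial g ∈ PU(H) such that for every n ∈ ℕ the closure of (g^{±PU(H)})^{·n} is not all of PU(H). -/
open Pointwise

local notation "⟪" x ", " y "⟫" => @inner ℂ _ _ x y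

open Submodule

section Aux

variable {H : Type*} [NormedAddCommGroup H] [InnerProductSpace ℂ H] [CompleteSpace H]

theorem reflCLM_selfAdjoint (K : Submodule ℂ H) [CompleteSpace K] :
    IsSelfAdjoint ((reflection K).toLinearIsometry.toContinuousLinearMap) := by
  rw [ContinuousLinearMap.isSelfAdjoint_iff']
  refine (((reflection K).toLinearIsometry.toContinuousLinearMap).eq_adjoint_iff _).mpr ?_ |>.symm
  intro x y
  show ⟪reflection K x, y⟫ = ⟪x, reflection K y⟫
  simp only [reflection_apply, two_smul]
  rw [inner_sub_left, inner_sub_right, inner_add_left, inner_add_right,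
    inner_starProjection_left_eq_right]

/-- The reflection about a complete subspace, as a unitary operator. -/
noncomputable def reflU (K : Submodule ℂ H) [CompleteSpace K] : unitary (H →L[ℂ] H) := by
  refine ⟨(reflection K).toLinearIsometry.toContinuousLinearMap, ?_, ?_⟩ <;>
  · rw [(reflCLM_selfAdjoint K).star_eq]
    ext x
    show reflection K (reflection K x) = x
    simp

@[simp] theorem reflU_apply (K : Submodule ℂ H) [CompleteSpace K] (x : H) :
    ((reflU K : unitary (H →L[ℂ] H)) : H →L[ℂ] H) x = reflection K x := rfl

theorem reflU_mul_self (K : Submodule ℂ H) [CompleteSpace K] :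
    (reflU K : unitary (H →L[ℂ] H)) * reflU K = 1 := by
  ext x
  show reflection K (reflection K x) = x
  simp

theorem reflU_inv (K : Submodule ℂ H) [CompleteSpace K] :
    (reflU K : unitary (H →L[ℂ] H))⁻¹ = reflU K :=
  inv_eq_of_mul_eq_one_right (reflU_mul_self K)

theorem center_mem_span {z : unitary (H →L[ℂ] H)}
    (hz : z ∈ Subgroup.center (unitary (H →L[ℂ] H))) (x : H) :
    (z : H →L[ℂ] H) x ∈ (Submodule.span ℂ {x} : Submodule ℂ H) := by
  set K : Submodule ℂ H := (ℂ ∙ x)ᗮ with hK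
  haveI : CompleteSpace K := (Submodule.isClosed_orthogonal _).completeSpace_coe
  have hcomm : z * reflU K = reflU K * z := (Subgroup.mem_center_iff.mp hz (reflU K)).symm
  have hx : x ∈ Kᗮ := Submodule.le_orthogonal_orthogonal _ (Submodule.mem_span_singleton_self x)
  have hsx : reflection K x = -x := reflection_mem_subspace_orthogonalComplement_eq_neg hx
  have happ : (z : H →L[ℂ] H) (reflection K x) = reflection K ((z : H →L[ℂ] H) x) := by
    have := congrArg (fun w : unitary (H →L[ℂ] H) => (w : H →L[ℂ] H) x) hcomm
    simpa [MulMemClass.coe_mul, ContinuousLinearMap.mul_apply] using this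
  rw [hsx, map_neg] at happ
  have hmem : (z : H →L[ℂ] H) x ∈ Kᗮ := by
    rw [← orthogonalProjection_eq_zero_iff]
    have h2 : reflection K ((z : H →L[ℂ] H) x) = -((z : H →L[ℂ] H) x) := happ.symm
    rw [reflection_apply, starProjection_apply] at h2
    have h3 : (((orthogonalProjection K) ((z : H →L[ℂ] H) x)) : H) +
        ((orthogonalProjection K) ((z : H →L[ℂ] H) x) : H) = 0 := by
      rw [← two_smul ℕ]
      have := sub_eq_iff_eq_add.mp h2
      simpa using this
    have h4 : (((orthogonalProjection K) ((z : H →L[ℂ] H) x)) : H) = 0 := by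
      have := congrArg (fun v : H => (2:ℂ)⁻¹ • v)
        (two_smul ℂ (((orthogonalProjection K) ((z : H →L[ℂ] H) x)) : H) ▸ h3)
      simpa [smul_smul] using this
    exact Submodule.coe_eq_zero.mp h4
  rw [hK] at hmem
  rwa [Submodule.orthogonal_orthogonal] at hmem

theorem center_scalar [Nontrivial H] {z : unitary (H →L[ℂ] H)}
    (hz : z ∈ Subgroup.center (unitary (H →L[ℂ] H))) :
    ∃ μ : ℂ, ‖μ‖ = 1 ∧ (z : H →L[ℂ] H) = μ • (1 : H →L[ℂ] H) := by
  obtain ⟨x0, hx0⟩ := exists_ne (0 : H)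
  obtain ⟨μ, hμ⟩ := Submodule.mem_span_singleton.mp (center_mem_span hz x0)
  refine ⟨μ, ?_, ?_⟩
  · have hiso : ‖(z : H →L[ℂ] H) x0‖ = ‖x0‖ := by
      have h1 : (star (z : H →L[ℂ] H)) * z = 1 := z.2.1
      have : ⟪(z : H →L[ℂ] H) x0, (z : H →L[ℂ] H) x0⟫ = ⟪x0, x0⟫ := by
        rw [← ContinuousLinearMap.adjoint_inner_right, ← ContinuousLinearMap.star_eq_adjoint]
        rw [show (star (z : H →L[ℂ] H)) ((z : H →L[ℂ] H) x0)
            = ((star (z : H →L[ℂ] H)) * (z : H →L[ℂ] H)) x0 from rfl, h1,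
          ContinuousLinearMap.one_apply]
      rw [inner_self_eq_norm_sq_to_K, inner_self_eq_norm_sq_to_K] at this
      have h2 : (‖(z : H →L[ℂ] H) x0‖ : ℝ) ^ 2 = ‖x0‖ ^ 2 := by exact_mod_cast this
      nlinarith [norm_nonneg ((z : H →L[ℂ] H) x0), norm_nonneg x0]
    rw [← hμ, norm_smul] at hiso
    have : ‖x0‖ ≠ 0 := norm_ne_zero_iff.mpr hx0
    field_simp at hiso
    exact hiso
  · ext y
    rcases eq_or_ne y 0 with rfl | hy
    · simp
    by_cases hind : y ∈ (ℂ ∙ x0 : Submodule ℂ H)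
    · obtain ⟨a, rfl⟩ := Submodule.mem_span_singleton.mp hind
      simp only [map_smul, ← hμ, ContinuousLinearMap.smul_apply, ContinuousLinearMap.one_apply,
        smul_comm a μ]
    · obtain ⟨c, hc⟩ := Submodule.mem_span_singleton.mp (center_mem_span hz y)
      obtain ⟨d, hd⟩ := Submodule.mem_span_singleton.mp (center_mem_span hz (x0 + y))
      have hsum : d • x0 + d • y = μ • x0 + c • y := by
        rw [← smul_add, hd, map_add, ← hμ, ← hc]
      have h5 : (d - μ) • x0 = (c - d) • y := by
        rw [sub_smul, sub_smul, sub_eq_sub_iff_add_eq_add, add_comm (c • y) (μ • x0)]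
        exact hsum
      have hdc : c = d := by
        by_contra hne
        apply hind
        rw [Submodule.mem_span_singleton]
        refine ⟨(c - d)⁻¹ * (d - μ), ?_⟩
        rw [mul_smul, h5, smul_smul, inv_mul_cancel₀ (sub_ne_zero.mpr hne), one_smul]
      have hcμ : c = μ := by
        rw [← hdc, sub_self, zero_smul] at h5
        rcases smul_eq_zero.mp h5 with h | h
        · exact sub_eq_zero.mp h
        · exact absurd h hx0
      rw [ContinuousLinearMap.smul_apply, ContinuousLinearMap.one_apply, ← hc, hcμ]

/-- `T` has rank at most `n`. -/
def LowRank (n : ℕ) (T : H →L[ℂ] H) : Prop :=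
  ∃ W : Submodule ℂ H, FiniteDimensional ℂ W ∧ Module.finrank ℂ W ≤ n ∧ ∀ x, T x ∈ W

theorem lowRank_mul {n m : ℕ} {a b : H →L[ℂ] H} (ha : LowRank n (a - 1)) (hb : LowRank m (b - 1)) :
    LowRank (n + m) (a * b - 1) := by
  obtain ⟨W, hWfd, hWr, hW⟩ := ha
  obtain ⟨V, hVfd, hVr, hV⟩ := hb
  refine ⟨W ⊔ V.map (a : H →ₗ[ℂ] H), ?_, ?_, ?_⟩
  · haveI := hWfd; haveI := hVfd; infer_instance
  · haveI := hWfd; haveI := hVfd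
    haveI : FiniteDimensional ℂ (V.map (a : H →ₗ[ℂ] H)) := inferInstance
    calc Module.finrank ℂ ↥(W ⊔ V.map (a : H →ₗ[ℂ] H))
        ≤ Module.finrank ℂ W + Module.finrank ℂ (V.map (a : H →ₗ[ℂ] H)) := by
          have := Submodule.finrank_sup_add_finrank_inf_eq W (V.map (a : H →ₗ[ℂ] H))
          omega
      _ ≤ n + m := by
          have := Submodule.finrank_map_le (a : H →ₗ[ℂ] H) V
          omega
  · intro x
    have key : (a * b - 1) x = a ((b - 1) x) + (a - 1) x := by
      simp [ContinuousLinearMap.sub_apply, ContinuousLinearMap.mul_apply, map_sub]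
    rw [key]
    exact Submodule.add_mem _
      (Submodule.mem_sup_right (Submodule.mem_map_of_mem (hV x)))
      (Submodule.mem_sup_left (hW x))

theorem lowRank_conj {n : ℕ} {u : unitary (H →L[ℂ] H)} (h : LowRank n ((u : H →L[ℂ] H) - 1))
    (a : unitary (H →L[ℂ] H)) :
    LowRank n (((a * u * a⁻¹ : unitary (H →L[ℂ] H)) : H →L[ℂ] H) - 1) := by
  obtain ⟨W, hWfd, hWr, hW⟩ := h
  refine ⟨W.map ((a : H →L[ℂ] H) : H →ₗ[ℂ] H), by haveI := hWfd; infer_instance, by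
    haveI := hWfd
    exact le_trans (Submodule.finrank_map_le _ _) hWr, ?_⟩
  intro x
  have hiv : (a : H →L[ℂ] H) (((a⁻¹ : unitary (H →L[ℂ] H)) : H →L[ℂ] H) x) = x := by
    have : ((a * a⁻¹ : unitary (H →L[ℂ] H)) : H →L[ℂ] H) = 1 := by rw [mul_inv_cancel]; rfl
    calc (a : H →L[ℂ] H) (((a⁻¹ : unitary (H →L[ℂ] H)) : H →L[ℂ] H) x)
        = ((a * a⁻¹ : unitary (H →L[ℂ] H)) : H →L[ℂ] H) x := rfl
      _ = x := by rw [this]; rfl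
  have key : (((a * u * a⁻¹ : unitary (H →L[ℂ] H)) : H →L[ℂ] H) - 1) x
      = (a : H →L[ℂ] H) (((u : H →L[ℂ] H) - 1) (((a⁻¹ : unitary (H →L[ℂ] H)) : H →L[ℂ] H) x)) := by
    simp only [ContinuousLinearMap.sub_apply, ContinuousLinearMap.one_apply, map_sub,
      MulMemClass.coe_mul, ContinuousLinearMap.mul_apply, hiv]
  rw [key]
  exact Submodule.mem_map_of_mem (hW _)

theorem lowRank_det_zero {n : ℕ} {T : H →L[ℂ] H} (h : LowRank n T) (e y : Fin (n+1) → H) :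
    Matrix.det (Matrix.of fun i j => ⟪y j, T (e i)⟫) = 0 := by
  obtain ⟨W, hWfd, hWr, hW⟩ := h
  haveI := hWfd
  have hnli : ¬ LinearIndependent ℂ (fun i : Fin (n+1) => (⟨T (e i), hW (e i)⟩ : W)) := by
    intro hli
    have := hli.fintype_card_le_finrank
    simp only [Fintype.card_fin] at this
    omega
  obtain ⟨g, hgsum, i0, hgi0⟩ := Fintype.not_linearIndependent_iff.mp hnli
  have hsum : (∑ i, g i • T (e i)) = 0 := by
    have := congrArg (W.subtype) hgsum
    simpa [map_sum] using this
  rw [← Matrix.exists_vecMul_eq_zero_iff]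
  refine ⟨g, Function.ne_iff.mpr ⟨i0, hgi0⟩, ?_⟩
  funext j
  show (∑ i, g i * (Matrix.of fun i j => ⟪y j, T (e i)⟫) i j) = 0
  calc (∑ i, g i * (Matrix.of fun i j => ⟪y j, T (e i)⟫) i j)
      = ∑ i, ⟪y j, g i • T (e i)⟫ := by
        refine Finset.sum_congr rfl fun i _ => ?_
        rw [inner_smul_right]; rfl
    _ = ⟪y j, ∑ i, g i • T (e i)⟫ := (inner_sum _ _ _).symm
    _ = 0 := by rw [hsum, inner_zero_right]

theorem closed_C (n : ℕ) :
    letI : TopologicalSpace (unitary (H →L[ℂ] H)) := TopologicalSpace.induced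
      (fun u : unitary (H →L[ℂ] H) => ((u : H →L[ℂ] H) : H → H)) Pi.topologicalSpace
    IsClosed {w : unitary (H →L[ℂ] H) | ∃ μ : Metric.sphere (0:ℂ) 1,
      ∀ e y : Fin (n+1) → H,
        (Matrix.of fun i j => ⟪y j, (w : H →L[ℂ] H) (e i) - (μ : ℂ) • e i⟫).det = 0} := by
  letI : TopologicalSpace (unitary (H →L[ℂ] H)) := TopologicalSpace.induced
      (fun u : unitary (H →L[ℂ] H) => ((u : H →L[ℂ] H) : H → H)) Pi.topologicalSpace
  have hcoe : Continuous (fun u : unitary (H →L[ℂ] H) => ((u : H →L[ℂ] H) : H → H)) :=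
    continuous_induced_dom
  have key : IsClosed {p : unitary (H →L[ℂ] H) × Metric.sphere (0:ℂ) 1 |
      ∀ e y : Fin (n+1) → H,
        (Matrix.of fun i j => ⟪y j, (p.1 : H →L[ℂ] H) (e i) - (p.2 : ℂ) • e i⟫).det = 0} := by
    have : {p : unitary (H →L[ℂ] H) × Metric.sphere (0:ℂ) 1 |
        ∀ e y : Fin (n+1) → H,
          (Matrix.of fun i j => ⟪y j, (p.1 : H →L[ℂ] H) (e i) - (p.2 : ℂ) • e i⟫).det = 0}
        = ⋂ (e : Fin (n+1) → H), ⋂ (y : Fin (n+1) → H),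
          {p : unitary (H →L[ℂ] H) × Metric.sphere (0:ℂ) 1 |
            (Matrix.of fun i j => ⟪y j, (p.1 : H →L[ℂ] H) (e i) - (p.2 : ℂ) • e i⟫).det = 0} := by
      ext p; simp [Set.mem_iInter]
    rw [this]
    refine isClosed_iInter fun e => isClosed_iInter fun y => isClosed_eq ?_ continuous_const
    refine Continuous.matrix_det (continuous_matrix fun i j => Continuous.inner ?_ ?_)
    · exact continuous_const
    · exact ((continuous_apply (e i)).comp (hcoe.comp continuous_fst)).sub
        (((continuous_subtype_val.comp continuous_snd)).smul continuous_const)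
  have heq : {w : unitary (H →L[ℂ] H) | ∃ μ : Metric.sphere (0:ℂ) 1,
      ∀ e y : Fin (n+1) → H,
        (Matrix.of fun i j => ⟪y j, (w : H →L[ℂ] H) (e i) - (μ : ℂ) • e i⟫).det = 0}
      = Prod.fst '' {p : unitary (H →L[ℂ] H) × Metric.sphere (0:ℂ) 1 |
      ∀ e y : Fin (n+1) → H,
        (Matrix.of fun i j => ⟪y j, (p.1 : H →L[ℂ] H) (e i) - (p.2 : ℂ) • e i⟫).det = 0} := by
    ext w
    constructor
    · rintro ⟨μ, hμ⟩; exact ⟨(w, μ), hμ, rfl⟩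
    · rintro ⟨⟨w', μ⟩, hμ, rfl⟩; exact ⟨μ, hμ⟩
  rw [heq]
  exact isClosedMap_fst_of_compactSpace _ key

end Aux

/-- The projective unitary group of an infinite-dimensional separable complex Hilbert space,
i.e. the quotient of the unitary group (with the strong operator topology) by its center,
with the quotient topology, fails topological bounded normal generation. -/
theorem stmt_6 {H : Type*} [NormedAddCommGroup H] [InnerProductSpace ℂ H]
    [CompleteSpace H] [TopologicalSpace.SeparableSpace H]
    (hinf : ¬ FiniteDimensional ℂ H) :
    letI : TopologicalSpace (unitary (H →L[ℂ] H)) :=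
      TopologicalSpace.induced
        (fun u : unitary (H →L[ℂ] H) => ((u : H →L[ℂ] H) : H → H)) Pi.topologicalSpace
    ∃ g : unitary (H →L[ℂ] H) ⧸ Subgroup.center (unitary (H →L[ℂ] H)), g ≠ 1 ∧
      ∀ n : ℕ, 1 ≤ n → closure (pmConj g ^ n) ≠
        (Set.univ : Set (unitary (H →L[ℂ] H) ⧸ Subgroup.center (unitary (H →L[ℂ] H)))) := by
  letI : TopologicalSpace (unitary (H →L[ℂ] H)) :=
    TopologicalSpace.induced
      (fun u : unitary (H →L[ℂ] H) => ((u : H →L[ℂ] H) : H → H)) Pi.topologicalSpace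
  haveI hnt : Nontrivial H := by
    by_contra hns
    rw [not_nontrivial_iff_subsingleton] at hns
    exact hinf inferInstance
  -- an orthonormal sequence
  obtain ⟨w, b, hb⟩ := exists_hilbertBasis ℂ H
  have hwinf : w.Infinite := by
    by_contra hfin
    rw [Set.not_infinite] at hfin
    apply hinf
    haveI hfd : FiniteDimensional ℂ (Submodule.span ℂ w) :=
      FiniteDimensional.span_of_finite ℂ hfin
    have hclosed : IsClosed ((Submodule.span ℂ w : Submodule ℂ H) : Set H) :=
      Submodule.closed_of_finiteDimensional _
    have htop : (Submodule.span ℂ w).topologicalClosure = ⊤ := by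
      have := b.dense_span
      rwa [hb, Subtype.range_coe] at this
    have hsp : (Submodule.span ℂ w) = (⊤ : Submodule ℂ H) := by
      rw [← hclosed.submodule_topologicalClosure_eq]; exact htop
    exact Module.Finite.of_surjective (Submodule.span ℂ w).subtype
      (fun x => ⟨⟨x, hsp ▸ Submodule.mem_top⟩, rfl⟩)
  set f : ℕ → H := fun k => (((Set.Infinite.natEmbedding w hwinf) k : w) : H) with hf
  have honf : Orthonormal ℂ f := by
    have hbase : Orthonormal ℂ (fun i : w => (i : H)) := hb ▸ b.orthonormal
    exact hbase.comp _ (Set.Infinite.natEmbedding w hwinf).injective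
  have hinner : ∀ i j : ℕ, ⟪f i, f j⟫ = if i = j then 1 else 0 := by
    intro i j
    have := orthonormal_iff_ite.mp honf i j
    simpa using this
  have hfne : ∀ k, f k ≠ 0 := fun k => honf.ne_zero k
  -- the low-rank reflection u
  set x0 : H := f 0 with hx0def
  set K0 : Submodule ℂ H := (ℂ ∙ x0)ᗮ with hK0
  haveI : CompleteSpace K0 := (Submodule.isClosed_orthogonal _).completeSpace_coe
  set u : unitary (H →L[ℂ] H) := reflU K0 with hu
  have hu1 : LowRank 1 ((u : H →L[ℂ] H) - 1) := by
    refine ⟨ℂ ∙ x0, inferInstance, le_of_eq (finrank_span_singleton (hfne 0)), ?_⟩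
    intro x
    have hform : ((u : H →L[ℂ] H) - 1) x =
        ((orthogonalProjection K0 x : H) - x) + ((orthogonalProjection K0 x : H) - x) := by
      simp only [hu, ContinuousLinearMap.sub_apply, ContinuousLinearMap.one_apply, reflU_apply,
        reflection_apply, starProjection_apply, two_smul]
      abel
    rw [hform]
    have hmem : ((orthogonalProjection K0 x : H) - x) ∈ (ℂ ∙ x0 : Submodule ℂ H) := by
      have h1 : x - (orthogonalProjection K0 x : H) ∈ K0ᗮ :=
        sub_starProjection_mem_orthogonal x
      have h2 : K0ᗮ = (ℂ ∙ x0 : Submodule ℂ H) := by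
        rw [hK0]; exact Submodule.orthogonal_orthogonal _
      rw [h2] at h1
      simpa using (Submodule.neg_mem _ h1)
    exact Submodule.add_mem _ hmem hmem
  have huinv : u⁻¹ = u := by rw [hu]; exact reflU_inv K0
  have hSlow : ∀ s ∈ pmConj u, LowRank 1 ((s : H →L[ℂ] H) - 1) := by
    rintro s (⟨h, rfl⟩ | ⟨h, rfl⟩)
    · exact lowRank_conj hu1 h
    · rw [huinv]; exact lowRank_conj hu1 h
  have hpow : ∀ m : ℕ, ∀ t ∈ (pmConj u) ^ m, LowRank m ((t : H →L[ℂ] H) - 1) := by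
    intro m
    induction m with
    | zero =>
      intro t ht
      rw [pow_zero, Set.mem_one] at ht
      subst ht
      refine ⟨⊥, inferInstance, by simp, fun x => ?_⟩
      have h1 : ((1 : unitary (H →L[ℂ] H)) : H →L[ℂ] H) = 1 := rfl
      rw [h1, sub_self, ContinuousLinearMap.zero_apply]
      exact Submodule.zero_mem ⊥
    | succ m ih =>
      intro t ht
      rw [pow_succ] at ht
      obtain ⟨p, hp, q, hq, rfl⟩ := Set.mem_mul.mp ht
      have := lowRank_mul (ih p hp) (hSlow q hq)
      simpa [MulMemClass.coe_mul] using this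
  -- the reflection v with both eigenspaces infinite-dimensional
  set Kev : Submodule ℂ H :=
    (Submodule.span ℂ (Set.range fun k : ℕ => f (2*k))).topologicalClosure with hKev
  haveI : CompleteSpace Kev := (Submodule.isClosed_topologicalClosure _).completeSpace_coe
  have heven : ∀ k, f (2*k) ∈ Kev :=
    fun k => Submodule.le_topologicalClosure _ (Submodule.subset_span ⟨k, rfl⟩)
  have hodd : ∀ k, f (2*k+1) ∈ Kevᗮ := by
    intro k
    have hle : Kev ≤ (ℂ ∙ f (2*k+1))ᗮ := by
      apply Submodule.topologicalClosure_minimal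
      · rw [Submodule.span_le]
        rintro _ ⟨k', rfl⟩
        rw [SetLike.mem_coe, Submodule.mem_orthogonal_singleton_iff_inner_right]
        have := hinner (2*k+1) (2*k')
        rwa [if_neg (by omega)] at this
      · exact Submodule.isClosed_orthogonal _
    rw [Submodule.mem_orthogonal]
    intro x hx
    exact Submodule.mem_orthogonal_singleton_iff_inner_left.mp (hle hx)
  set v : unitary (H →L[ℂ] H) := reflU Kev with hv
  have hveven : ∀ k, (v : H →L[ℂ] H) (f (2*k)) = f (2*k) := by
    intro k
    rw [hv, reflU_apply]
    exact reflection_mem_subspace_eq_self (heven k)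
  have hvodd : ∀ k, (v : H →L[ℂ] H) (f (2*k+1)) = -(f (2*k+1)) := by
    intro k
    rw [hv, reflU_apply]
    exact reflection_mem_subspace_orthogonalComplement_eq_neg (hodd k)
  refine ⟨QuotientGroup.mk u, ?_, ?_⟩
  · -- u is not central
    intro h1
    have hz : u ∈ Subgroup.center (unitary (H →L[ℂ] H)) := (QuotientGroup.eq_one_iff u).mp h1
    obtain ⟨μ, hμn, hμ⟩ := center_scalar hz
    have hx0mem : x0 ∈ K0ᗮ :=
      Submodule.le_orthogonal_orthogonal _ (Submodule.mem_span_singleton_self x0)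
    have hux0 : (u : H →L[ℂ] H) x0 = -x0 := by
      rw [hu, reflU_apply]
      exact reflection_mem_subspace_orthogonalComplement_eq_neg hx0mem
    have hf1K : f 1 ∈ K0 := by
      rw [hK0, Submodule.mem_orthogonal_singleton_iff_inner_right]
      have := hinner 0 1
      rwa [if_neg (by omega)] at this
    have huf1 : (u : H →L[ℂ] H) (f 1) = f 1 := by
      rw [hu, reflU_apply]
      exact reflection_mem_subspace_eq_self hf1K
    rw [hμ, ContinuousLinearMap.smul_apply, ContinuousLinearMap.one_apply] at hux0 huf1
    have hμm : μ = -1 := by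
      have h0 : (μ + 1) • x0 = 0 := by rw [add_smul, one_smul, hux0]; abel
      rcases smul_eq_zero.mp h0 with h | h
      · linear_combination h
      · exact absurd h (hfne 0)
    have hμp : μ = 1 := by
      have h0 : (μ - 1) • f 1 = 0 := by rw [sub_smul, one_smul, huf1]; abel
      rcases smul_eq_zero.mp h0 with h | h
      · linear_combination h
      · exact absurd h (hfne 1)
    rw [hμm] at hμp
    norm_num at hμp
  · -- no power of the conjugacy class is dense
    intro n hn heq
    set Cn : Set (unitary (H →L[ℂ] H)) := {w : unitary (H →L[ℂ] H) |
      ∃ μ : Metric.sphere (0:ℂ) 1, ∀ e y : Fin (n+1) → H,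
        (Matrix.of fun i j => ⟪y j, (w : H →L[ℂ] H) (e i) - (μ : ℂ) • e i⟫).det = 0} with hCn
    have hCclosed : IsClosed Cn := closed_C n
    have hSC : (pmConj u) ^ n ⊆ Cn := by
      intro t ht
      refine ⟨⟨1, by simp⟩, fun e y => ?_⟩
      have := lowRank_det_zero (hpow n t ht) e y
      simpa [ContinuousLinearMap.sub_apply, ContinuousLinearMap.one_apply] using this
    have hCZ : ∀ c ∈ Cn, ∀ z ∈ Subgroup.center (unitary (H →L[ℂ] H)), c * z ∈ Cn := by
      rintro c ⟨μ, hμ⟩ z hz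
      obtain ⟨μ0, hμ0n, hμ0⟩ := center_scalar hz
      have hμn : ‖(μ : ℂ)‖ = 1 := by
        have := μ.2
        rwa [mem_sphere_zero_iff_norm] at this
      refine ⟨⟨μ0 * μ, by rw [mem_sphere_zero_iff_norm, norm_mul, hμ0n, hμn, mul_one]⟩,
        fun e y => ?_⟩
      have hmat : (Matrix.of fun i j =>
            ⟪y j, ((c * z : unitary (H →L[ℂ] H)) : H →L[ℂ] H) (e i) - (μ0 * (μ:ℂ)) • e i⟫)
          = μ0 • (Matrix.of fun i j =>
            ⟪y j, (c : H →L[ℂ] H) (e i) - (μ:ℂ) • e i⟫) := by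
        ext i j
        have hz' : ((c * z : unitary (H →L[ℂ] H)) : H →L[ℂ] H) (e i)
            = μ0 • (c : H →L[ℂ] H) (e i) := by
          rw [MulMemClass.coe_mul, ContinuousLinearMap.mul_apply, hμ0]
          rw [ContinuousLinearMap.smul_apply, ContinuousLinearMap.one_apply, map_smul]
        simp only [Matrix.smul_apply, Matrix.of_apply, hz', smul_eq_mul]
        rw [← inner_smul_right]
        congr 1
        rw [smul_sub, smul_smul]
      rw [hmat, Matrix.det_smul, hμ e y, mul_zero]
    have hvC : v ∉ Cn := by
      rintro ⟨μ, hμ⟩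
      have hμn : ‖(μ : ℂ)‖ = 1 := by
        have := μ.2
        rwa [mem_sphere_zero_iff_norm] at this
      by_cases h1 : (μ : ℂ) = 1
      · have hdet := hμ (fun i => f (2*(i:ℕ)+1)) (fun i => f (2*(i:ℕ)+1))
        have hmat : (Matrix.of fun i j : Fin (n+1) =>
              ⟪f (2*(j:ℕ)+1), (v : H →L[ℂ] H) (f (2*(i:ℕ)+1)) - (μ:ℂ) • f (2*(i:ℕ)+1)⟫)
            = (-1 - (μ:ℂ)) • (1 : Matrix (Fin (n+1)) (Fin (n+1)) ℂ) := by
          ext i j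
          rw [Matrix.of_apply, hvodd]
          have : -(f (2*(i:ℕ)+1)) - (μ:ℂ) • f (2*(i:ℕ)+1) = (-1 - (μ:ℂ)) • f (2*(i:ℕ)+1) := by
            rw [sub_smul, neg_smul, one_smul]
          rw [this, inner_smul_right, hinner]
          rw [Matrix.smul_apply, Matrix.one_apply, smul_eq_mul]
          congr 1
          rcases eq_or_ne i j with hij | hij
          · subst hij; rw [if_pos rfl, if_pos rfl]
          · rw [if_neg (fun hcon => hij (Fin.val_injective (by omega)).symm), if_neg hij]
        rw [hmat, Matrix.det_smul, Matrix.det_one, mul_one] at hdet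
        exact pow_ne_zero _ (by rw [h1]; norm_num) hdet
      · have hdet := hμ (fun i => f (2*(i:ℕ))) (fun i => f (2*(i:ℕ)))
        have hmat : (Matrix.of fun i j : Fin (n+1) =>
              ⟪f (2*(j:ℕ)), (v : H →L[ℂ] H) (f (2*(i:ℕ))) - (μ:ℂ) • f (2*(i:ℕ))⟫)
            = (1 - (μ:ℂ)) • (1 : Matrix (Fin (n+1)) (Fin (n+1)) ℂ) := by
          ext i j
          rw [Matrix.of_apply, hveven]
          have : f (2*(i:ℕ)) - (μ:ℂ) • f (2*(i:ℕ)) = (1 - (μ:ℂ)) • f (2*(i:ℕ)) := by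
            rw [sub_smul, one_smul]
          rw [this, inner_smul_right, hinner]
          rw [Matrix.smul_apply, Matrix.one_apply, smul_eq_mul]
          congr 1
          rcases eq_or_ne i j with hij | hij
          · subst hij; rw [if_pos rfl, if_pos rfl]
          · rw [if_neg (fun hcon => hij (Fin.val_injective (by omega)).symm), if_neg hij]
        rw [hmat, Matrix.det_smul, Matrix.det_one, mul_one] at hdet
        exact pow_ne_zero _ (sub_ne_zero.mpr (fun hcon => h1 hcon.symm)) hdet
    -- quotient arguments
    have hπqm : Topology.IsQuotientMap
        (QuotientGroup.mk : unitary (H →L[ℂ] H) →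
          unitary (H →L[ℂ] H) ⧸ Subgroup.center (unitary (H →L[ℂ] H))) :=
      isQuotientMap_quotient_mk'
    have hsat : (QuotientGroup.mk : unitary (H →L[ℂ] H) → unitary (H →L[ℂ] H) ⧸ Subgroup.center (unitary (H →L[ℂ] H))) ⁻¹'
        ((QuotientGroup.mk : unitary (H →L[ℂ] H) → unitary (H →L[ℂ] H) ⧸ Subgroup.center (unitary (H →L[ℂ] H))) '' Cn) = Cn := by
      ext a
      constructor
      · rintro ⟨c, hc, hca⟩
        have hzmem : c⁻¹ * a ∈ Subgroup.center (unitary (H →L[ℂ] H)) := QuotientGroup.eq.mp hca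
        have hrw : a = c * (c⁻¹ * a) := by group
        rw [hrw]
        exact hCZ c hc _ hzmem
      · intro ha
        exact ⟨a, ha, rfl⟩
    have hD : IsClosed ((QuotientGroup.mk : unitary (H →L[ℂ] H) → unitary (H →L[ℂ] H) ⧸ Subgroup.center (unitary (H →L[ℂ] H))) '' Cn) :=
      hπqm.isClosed_preimage.mp (by rw [hsat]; exact hCclosed)
    have hstep1 : pmConj (QuotientGroup.mk u : unitary (H →L[ℂ] H) ⧸
        Subgroup.center (unitary (H →L[ℂ] H))) ⊆
        (QuotientGroup.mk : unitary (H →L[ℂ] H) → unitary (H →L[ℂ] H) ⧸ Subgroup.center (unitary (H →L[ℂ] H))) '' (pmConj u) := by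
      rintro x (⟨hbar, rfl⟩ | ⟨hbar, rfl⟩) <;>
        obtain ⟨h, rfl⟩ := QuotientGroup.mk_surjective hbar
      · exact ⟨h * u * h⁻¹, Or.inl ⟨h, rfl⟩, rfl⟩
      · exact ⟨h * u⁻¹ * h⁻¹, Or.inr ⟨h, rfl⟩, rfl⟩
    have hstepn : ∀ m : ℕ, pmConj (QuotientGroup.mk u : unitary (H →L[ℂ] H) ⧸
        Subgroup.center (unitary (H →L[ℂ] H))) ^ m ⊆
        (QuotientGroup.mk : unitary (H →L[ℂ] H) → unitary (H →L[ℂ] H) ⧸ Subgroup.center (unitary (H →L[ℂ] H))) '' ((pmConj u) ^ m) := by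
      intro m
      induction m with
      | zero =>
        rw [pow_zero, pow_zero]
        intro x hx
        rw [Set.mem_one] at hx
        exact ⟨1, Set.mem_one.mpr rfl, by rw [hx]; rfl⟩
      | succ m ih =>
        rw [pow_succ, pow_succ]
        intro x hx
        obtain ⟨p, hp, q, hq, rfl⟩ := Set.mem_mul.mp hx
        obtain ⟨p', hp', rfl⟩ := ih hp
        obtain ⟨q', hq', rfl⟩ := hstep1 hq
        exact ⟨p' * q', Set.mul_mem_mul hp' hq', rfl⟩
    have himg : pmConj (QuotientGroup.mk u : unitary (H →L[ℂ] H) ⧸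
        Subgroup.center (unitary (H →L[ℂ] H))) ^ n ⊆
        (QuotientGroup.mk : unitary (H →L[ℂ] H) → unitary (H →L[ℂ] H) ⧸ Subgroup.center (unitary (H →L[ℂ] H))) '' Cn :=
      (hstepn n).trans (Set.image_mono hSC)
    have hvmem : (QuotientGroup.mk v : unitary (H →L[ℂ] H) ⧸
        Subgroup.center (unitary (H →L[ℂ] H))) ∈
        (QuotientGroup.mk : unitary (H →L[ℂ] H) → unitary (H →L[ℂ] H) ⧸ Subgroup.center (unitary (H →L[ℂ] H))) '' Cn := by
      have hmem : (QuotientGroup.mk v : unitary (H →L[ℂ] H) ⧸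
          Subgroup.center (unitary (H →L[ℂ] H))) ∈
          closure (pmConj (QuotientGroup.mk u : unitary (H →L[ℂ] H) ⧸
            Subgroup.center (unitary (H →L[ℂ] H))) ^ n) := by
        rw [heq]; trivial
      exact closure_minimal himg hD hmem
    have : v ∈ Cn := by
      rw [← hsat]
      exact hvmem
    exact hvC this
end

section
/- For a compact Hausdorff topological group G, topological bounded normal generation is equivalent to strong topological bounded normal generation: (for every non-trivial g ∈ G there is n ∈ ℕ with closure((g^{±G})^{·n}) = G) if and only if (for every non-trivial g ∈ G there is n ∈ ℕ with (closure(g^{±G}))^{·n} = G). -/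
open Pointwise

lemma closure_mul_closure_subset {G : Type*} [Group G] [TopologicalSpace G]
    [IsTopologicalGroup G] (s t : Set G) : closure s * closure t ⊆ closure (s * t) :=
  Set.mul_subset_iff.2 fun _ hx _ hy =>
    map_mem_closure₂ continuous_mul hx hy fun _ ha _ hb => Set.mul_mem_mul ha hb

lemma isCompact_pow {G : Type*} [Group G] [TopologicalSpace G] [IsTopologicalGroup G]
    (s : Set G) (hs : IsCompact s) (n : ℕ) (hn : 1 ≤ n) : IsCompact (s ^ n) := by
  induction n with
  | zero => omega
  | succ n ih =>
    rcases Nat.eq_or_lt_of_le hn with h | h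
    · simpa [← h] using hs
    · rw [pow_succ]
      exact (ih (by omega)).mul hs

lemma closure_pow_eq {G : Type*} [Group G] [TopologicalSpace G] [IsTopologicalGroup G]
    [CompactSpace G] [T2Space G] (s : Set G) (n : ℕ) (hn : 1 ≤ n) :
    (closure s) ^ n = closure (s ^ n) := by
  apply Set.Subset.antisymm
  · induction n with
    | zero => omega
    | succ n ih =>
      rcases Nat.eq_or_lt_of_le hn with h | h
      · simp [← h]
      · rw [pow_succ, pow_succ]
        calc closure s ^ n * closure s ⊆ closure (s ^ n) * closure s :=
              Set.mul_subset_mul_right (ih (by omega))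
          _ ⊆ closure (s ^ n * s) := closure_mul_closure_subset _ _
  · apply closure_minimal (Set.pow_subset_pow_left subset_closure)
    exact (isCompact_pow _ isClosed_closure.isCompact n hn).isClosed

/-- For compact Hausdorff topological groups, topological bounded normal generation is
equivalent to strong topological bounded normal generation. -/
theorem stmt_11 {G : Type*} [Group G] [TopologicalSpace G] [IsTopologicalGroup G]
    [CompactSpace G] [T2Space G] :
    (∀ g : G, g ≠ 1 → ∃ n : ℕ, 1 ≤ n ∧ closure (pmConj g ^ n) = (Set.univ : Set G)) ↔
      (∀ g : G, g ≠ 1 → ∃ n : ℕ, 1 ≤ n ∧ (closure (pmConj g)) ^ n = (Set.univ : Set G)) := by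
  constructor <;> intro H g hg <;> obtain ⟨n, hn, h⟩ := H g hg <;>
    exact ⟨n, hn, by rw [closure_pow_eq _ n hn] at *; assumption⟩
end

section
/- Let X be a set, let n ∈ ℕ, and let r be an equivalence relation on X each of whose equivalence classes has cardinality at most n. Then the group G = {σ ∈ Sym(X) : (σ(x), x) ∈ r for all x ∈ X} of permutations of X mapping each point to an r-equivalent point is locally finite: every finitely generated subgroup of G is finite. -/
/-- The full group of an equivalence relation `r` on `X`: all permutations of `X` mapping
each point to an `r`-equivalent point. -/
def eqRelFullGroup {X : Type*} (r : Setoid X) : Subgroup (Equiv.Perm X) where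
  carrier := {σ : Equiv.Perm X | ∀ x : X, r.r (σ x) x}
  one_mem' := fun x => r.refl' x
  mul_mem' := fun {a b} ha hb x => r.trans' (ha (b x)) (hb x)
  inv_mem' := fun {a} ha x => r.symm' (by simpa using ha (a⁻¹ x))

private lemma val_congr {X : Type*} {s : Set X} {k : ℕ} (e : s ≃ Fin k) {a c : X}
    (ha : a ∈ s) (hc : c ∈ s) (h : a = c) : (e ⟨a, ha⟩ : ℕ) = (e ⟨c, hc⟩ : ℕ) := by
  subst h; rfl

/-- The encoding of a point `x`: the actions of the generators on the class of `x`
(transported to `Fin n` via the chosen enumeration), the index of `x` in its own class,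
and the size of the class. -/
private noncomputable def encF {X : Type*} (r : Setoid X) (n : ℕ) (S : Finset (Equiv.Perm X))
    (m : X → ℕ) (hm : ∀ x, m x ≤ n)
    (e : ∀ x : X, {y : X | r.r x y} ≃ Fin (m x))
    (hS : ∀ σ ∈ S, ∀ z : X, r.r (σ z) z) (x : X) :
    ({σ : Equiv.Perm X // σ ∈ S} → Fin n → Fin n) × Fin n × Fin (n + 1) :=
  ⟨fun σ j =>
    if h : (j : ℕ) < m x then
      ⟨(e x ⟨σ.1 (((e x).symm ⟨(j : ℕ), h⟩ : {y : X | r.r x y}) : X),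
          r.trans' ((e x).symm ⟨(j : ℕ), h⟩).2 (r.symm' (hS σ.1 σ.2 _))⟩ : ℕ),
        lt_of_lt_of_le (Fin.is_lt _) (hm x)⟩
    else j,
   ⟨(e x ⟨x, r.refl' x⟩ : ℕ), lt_of_lt_of_le (Fin.is_lt _) (hm x)⟩,
   ⟨m x, Nat.lt_succ_of_le (hm x)⟩⟩

/-- Two points with equal encodings admit a "local isomorphism" between their classes,
compatible with all generators. -/
private lemma encF_iso {X : Type*} (r : Setoid X) (n : ℕ) (S : Finset (Equiv.Perm X))
    (m : X → ℕ) (hm : ∀ x, m x ≤ n)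
    (e : ∀ x : X, {y : X | r.r x y} ≃ Fin (m x))
    (hS : ∀ σ ∈ S, ∀ z : X, r.r (σ z) z) {x y : X}
    (hxy : encF r n S m hm e hS x = encF r n S m hm e hS y) :
    ∃ f : X → X, f x = y ∧ ∀ σ ∈ S, ∀ z, r.r x z → f (σ z) = σ (f z) := by
  classical
  have hmeq : m x = m y := congrArg (fun p : (_ × Fin n × Fin (n+1)) => (p.2.2 : ℕ)) hxy
  have hA : ∀ (σ : {σ : Equiv.Perm X // σ ∈ S}) (j : Fin n),
      (encF r n S m hm e hS x).1 σ j = (encF r n S m hm e hS y).1 σ j :=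
    fun σ j => congrFun (congrFun (congrArg Prod.fst hxy) σ) j
  have hb : ((encF r n S m hm e hS x).2.1 : ℕ) = ((encF r n S m hm e hS y).2.1 : ℕ) :=
    congrArg (fun p : (_ × Fin n × Fin (n+1)) => (p.2.1 : ℕ)) hxy
  refine ⟨fun z => if h : r.r x z then
      (((e y).symm ⟨(e x ⟨z, h⟩ : ℕ), hmeq ▸ Fin.is_lt _⟩ : {w : X | r.r y w}) : X) else z,
    ?_, ?_⟩
  · beta_reduce
    rw [dif_pos (r.refl' x)]
    have hbv : (e x ⟨x, r.refl' x⟩ : ℕ) = (e y ⟨y, r.refl' y⟩ : ℕ) := hb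
    have h2 : (⟨(e x ⟨x, r.refl' x⟩ : ℕ), hmeq ▸ Fin.is_lt _⟩ : Fin (m y))
        = e y ⟨y, r.refl' y⟩ := Fin.ext hbv
    rw [h2, Equiv.symm_apply_apply]
  · intro σ hσ z hz
    have hσz : r.r x (σ z) := r.trans' hz (r.symm' (hS σ hσ z))
    beta_reduce
    rw [dif_pos hz, dif_pos hσz]
    set j : Fin n := ⟨(e x ⟨z, hz⟩ : ℕ), lt_of_lt_of_le (Fin.is_lt _) (hm x)⟩ with hj
    have hjx : (j : ℕ) < m x := Fin.is_lt (e x ⟨z, hz⟩)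
    have hjy : (j : ℕ) < m y := hmeq ▸ hjx
    -- the image point
    set fz : X := (((e y).symm ⟨(e x ⟨z, hz⟩ : ℕ), hmeq ▸ Fin.is_lt _⟩ :
      {w : X | r.r y w}) : X) with hfz
    have hfzmem : r.r y fz :=
      ((e y).symm ⟨(e x ⟨z, hz⟩ : ℕ), hmeq ▸ Fin.is_lt _⟩).2
    have hσfz : r.r y (σ fz) := r.trans' hfzmem (r.symm' (hS σ hσ fz))
    -- compute the two sides of hA at j
    have hx1 : (((e x).symm ⟨(j : ℕ), hjx⟩ : {w : X | r.r x w}) : X) = z := by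
      have : (⟨(j : ℕ), hjx⟩ : Fin (m x)) = e x ⟨z, hz⟩ := Fin.ext rfl
      rw [this, Equiv.symm_apply_apply]
    have hy1 : (((e y).symm ⟨(j : ℕ), hjy⟩ : {w : X | r.r y w}) : X) = fz := by
      rw [hfz]
    have hAx : ((encF r n S m hm e hS x).1 ⟨σ, hσ⟩ j : ℕ) = (e x ⟨σ z, hσz⟩ : ℕ) := by
      show ((dite ((j : ℕ) < m x) _ _ : Fin n) : ℕ) = _
      rw [dif_pos hjx]
      exact val_congr (e x) _ _ (congrArg σ hx1)
    have hAy : ((encF r n S m hm e hS y).1 ⟨σ, hσ⟩ j : ℕ) = (e y ⟨σ fz, hσfz⟩ : ℕ) := by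
      show ((dite ((j : ℕ) < m y) _ _ : Fin n) : ℕ) = _
      rw [dif_pos hjy]
    have hkey : (e x ⟨σ z, hσz⟩ : ℕ) = (e y ⟨σ fz, hσfz⟩ : ℕ) := by
      rw [← hAx, ← hAy, hA ⟨σ, hσ⟩ j]
    have h3 : (⟨(e x ⟨σ z, hσz⟩ : ℕ), hmeq ▸ Fin.is_lt _⟩ : Fin (m y))
        = e y ⟨σ fz, hσfz⟩ := Fin.ext hkey
    rw [h3, Equiv.symm_apply_apply]

private lemma key_finite {X : Type*} (n : ℕ) (r : Setoid X)
    (hcard : ∀ x : X, {y : X | r.r x y}.encard ≤ (n : ℕ∞))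
    (S : Finset (Equiv.Perm X)) (hS : ∀ σ ∈ S, ∀ x : X, r.r (σ x) x) :
    Finite (Subgroup.closure (S : Set (Equiv.Perm X))) := by
  classical
  have hclos : Subgroup.closure (S : Set (Equiv.Perm X)) ≤ eqRelFullGroup r := by
    rw [Subgroup.closure_le]
    exact fun σ hσ x => hS σ hσ x
  have hmemC' : ∀ x : X, ∀ τ ∈ Subgroup.closure (S : Set (Equiv.Perm X)),
      ∀ z, r.r x z → r.r x (τ z) :=
    fun x τ hτ z hz => r.trans' hz (r.symm' (hclos hτ z))
  -- enumerate each class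
  have hex : ∀ x : X, ∃ m : ℕ, m ≤ n ∧ Nonempty ({y : X | r.r x y} ≃ Fin m) := by
    intro x
    have hfin : ({y : X | r.r x y}).Finite := Set.finite_of_encard_le_coe (hcard x)
    haveI := hfin.fintype
    refine ⟨Fintype.card {y : X | r.r x y}, ?_, ⟨Fintype.equivFin _⟩⟩
    have h1 : ({y : X | r.r x y}).encard = (Fintype.card {y : X | r.r x y} : ℕ∞) := by
      rw [Set.encard_eq_coe_toFinset_card, Set.toFinset_card]
    have h2 := hcard x
    rw [h1, Nat.cast_le] at h2
    exact h2
  choose m hm e0 using hex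
  let e : ∀ x : X, {y : X | r.r x y} ≃ Fin (m x) := fun x => (e0 x).some
  -- a function commuting with the generators on a class commutes with the closure
  have hcommclos : ∀ (x : X) (f : X → X), (∀ σ ∈ S, ∀ z, r.r x z → f (σ z) = σ (f z)) →
      ∀ τ ∈ Subgroup.closure (S : Set (Equiv.Perm X)), ∀ z, r.r x z → f (τ z) = τ (f z) := by
    intro x f hf τ hτ
    refine Subgroup.closure_induction
      (p := fun g _ => ∀ z, r.r x z → f (g z) = g (f z))
      (fun σ hσ z hz => hf σ hσ z hz) (fun z _ => rfl) ?_ ?_ hτ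
    · intro a c ha hc pa pc z hz
      have hcz : r.r x (c z) := hmemC' x c hc z hz
      calc f ((a * c) z) = f (a (c z)) := by rw [Equiv.Perm.mul_apply]
        _ = a (f (c z)) := pa _ hcz
        _ = a (c (f z)) := by rw [pc z hz]
        _ = (a * c) (f z) := (Equiv.Perm.mul_apply _ _ _).symm
    · intro a ha pa z hz
      have h1 : r.r x (a⁻¹ z) := hmemC' x a⁻¹ (inv_mem ha) z hz
      have h2 := pa (a⁻¹ z) h1
      rw [Equiv.Perm.coe_inv, Equiv.apply_symm_apply] at h2
      have h3 := congrArg (fun w => a⁻¹ w) h2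
      simpa using h3.symm
  -- the injection
  haveI : Fintype {σ : Equiv.Perm X // σ ∈ S} := FinsetCoe.fintype S
  set enc : X → ({σ : Equiv.Perm X // σ ∈ S} → Fin n → Fin n) × Fin n × Fin (n + 1) :=
    encF r n S m hm e hS with henc
  let Φ : Subgroup.closure (S : Set (Equiv.Perm X)) →
      ((({σ : Equiv.Perm X // σ ∈ S} → Fin n → Fin n) × Fin n × Fin (n + 1)) → Fin (n + 1)) :=
    fun τ ε => if h : ∃ x : X, enc x = ε then
      ⟨(e h.choose ⟨τ.1 h.choose, hmemC' h.choose τ.1 τ.2 h.choose (r.refl' _)⟩ : ℕ),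
        lt_of_lt_of_le (lt_of_lt_of_le (Fin.is_lt _) (hm _)) (Nat.le_succ n)⟩
    else 0
  have hinj : Function.Injective Φ := by
    intro τ τ' hΦ
    apply Subtype.ext
    apply Equiv.ext
    intro y
    have h : ∃ x : X, enc x = enc y := ⟨y, rfl⟩
    set x := h.choose with hxdef
    have hx : enc x = enc y := h.choose_spec
    have hval : (e x ⟨τ.1 x, hmemC' x τ.1 τ.2 x (r.refl' _)⟩ : ℕ)
        = (e x ⟨τ'.1 x, hmemC' x τ'.1 τ'.2 x (r.refl' _)⟩ : ℕ) := by
      have := congrFun hΦ (enc y)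
      simp only [Φ] at this
      rw [dif_pos h, dif_pos h] at this
      simpa using this
    have hτx : τ.1 x = τ'.1 x := by
      have := (e x).injective (Fin.ext hval)
      exact Subtype.ext_iff.1 this
    obtain ⟨f, hfx, hfcomm⟩ := encF_iso r n S m hm e hS hx
    have hc1 := hcommclos x f hfcomm τ.1 τ.2 x (r.refl' x)
    have hc2 := hcommclos x f hfcomm τ'.1 τ'.2 x (r.refl' x)
    rw [hfx] at hc1 hc2
    rw [← hc1, ← hc2, hτx]
  exact Finite.of_injective Φ hinj

/-- If every equivalence class of `r` has cardinality at most `n`, then the full group of `r`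
is locally finite: every finitely generated subgroup of it is finite. -/
theorem stmt_13 {X : Type*} (n : ℕ) (r : Setoid X)
    (hcard : ∀ x : X, {y : X | r.r x y}.encard ≤ (n : ℕ∞)) :
    ∀ H : Subgroup (eqRelFullGroup r), H.FG → Finite H := by
  intro H hFG
  classical
  obtain ⟨S, hSgen⟩ := hFG
  let S' : Finset (Equiv.Perm X) := S.image (fun g : ↥(eqRelFullGroup r) => (g : Equiv.Perm X))
  have hS' : ∀ σ ∈ S', ∀ x : X, r.r (σ x) x := by
    intro σ hσ x
    obtain ⟨g, _, rfl⟩ := Finset.mem_image.1 hσ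
    exact g.prop x
  have hfin : Finite (Subgroup.closure (S' : Set (Equiv.Perm X))) :=
    key_finite n r hcard S' hS'
  have hmap : Subgroup.map (eqRelFullGroup r).subtype H
      = Subgroup.closure (S' : Set (Equiv.Perm X)) := by
    rw [← hSgen, MonoidHom.map_closure]
    congr 1
    ext σ
    simp [S']
  haveI : Finite (Subgroup.map (eqRelFullGroup r).subtype H) := by
    rw [hmap]; exact hfin
  exact Finite.of_equiv _
    (Subgroup.equivMapOfInjective H ((eqRelFullGroup r).subtype)
      ((eqRelFullGroup r).subtype_injective)).toEquiv.symm
end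

section
/- There exists a Polish group G (a topological group whose topology is separable and completely metrizable) which has topological bounded normal generation but is not simple, i.e. G possesses a normal subgroup different from both the trivial subgroup and G. In particular, topological bounded normal generation does not imply bounded normal generation. -/
open Pointwise

open Pointwise

/-- Subgroup of order-preserving permutations of ℚ. -/
def OP : Subgroup (Equiv.Perm ℚ) where
  carrier := {f | StrictMono ⇑f}
  one_mem' := fun _ _ h => by simpa using h
  mul_mem' := by
    intro a b ha hb x y hxy
    simp only [Equiv.Perm.mul_apply]
    exact ha (hb hxy)
  inv_mem' := by
    intro a ha x y hxy
    rcases lt_trichotomy (a⁻¹ x) (a⁻¹ y) with h | h | h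
    · exact h
    · exfalso
      have : x = y := by
        have := congrArg a h; simpa using this
      exact lt_irrefl _ (this ▸ hxy)
    · exfalso
      have := ha h
      simp only [← Equiv.Perm.mul_apply, mul_inv_cancel, Equiv.Perm.one_apply] at this
      exact absurd hxy (not_lt.2 this.le)

lemma OP.strictMono (g : OP) : StrictMono ⇑(g : Equiv.Perm ℚ) := g.2
-- piecewise linear bump
noncomputable def pl (m c d : ℚ) : ℚ → ℚ := fun x =>
  if x ≤ m then x else if x ≤ c then m + (x - m) * (d - m) / (c - m) else x + (d - c)

lemma pl_inv {m c d : ℚ} (hc : m < c) (hd : m < d) (x : ℚ) : pl m d c (pl m c d x) = x := by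
  unfold pl
  rcases le_or_gt x m with h1 | h1
  · simp [h1]
  · rcases le_or_gt x c with h2 | h2
    · have hcm : (0:ℚ) < c - m := by linarith
      have hdm : (0:ℚ) < d - m := by linarith
      have hy1 : ¬ (m + (x - m) * (d - m) / (c - m) ≤ m) := by
        rw [not_le]
        have : 0 < (x - m) * (d - m) / (c - m) :=
          div_pos (mul_pos (by linarith) (by linarith)) hcm
        linarith
      have hy2 : m + (x - m) * (d - m) / (c - m) ≤ d := by
        have : (x - m) * (d - m) / (c - m) ≤ d - m := by
          rw [div_le_iff₀ hcm]; nlinarith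
        linarith
      rw [if_neg (by linarith : ¬ x ≤ m), if_pos h2, if_neg hy1, if_pos hy2]
      field_simp
      ring
    · have hy1 : ¬ (x + (d - c) ≤ m) := by push_neg; linarith
      have hy2 : ¬ (x + (d - c) ≤ d) := by push_neg; linarith
      rw [if_neg (by linarith : ¬ x ≤ m), if_neg (by linarith : ¬ x ≤ c), if_neg hy1, if_neg hy2]
      ring

lemma pl_strictMono {m c d : ℚ} (hc : m < c) (hd : m < d) : StrictMono (pl m c d) := by
  intro x y hxy
  have hcm : (0:ℚ) < c - m := by linarith
  have hdm : (0:ℚ) < d - m := by linarith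
  unfold pl
  rcases le_or_gt x m with h1 | h1 <;> rcases le_or_gt y m with h2 | h2
  · simp only [if_pos h1, if_pos h2]; exact hxy
  · rcases le_or_gt y c with h3 | h3
    · rw [if_pos h1, if_neg (not_le.2 h2), if_pos h3]
      have : 0 < (y - m) * (d - m) / (c - m) :=
        div_pos (mul_pos (by linarith) (by linarith)) hcm
      linarith
    · rw [if_pos h1, if_neg (not_le.2 h2), if_neg (not_le.2 h3)]
      linarith
  · linarith
  · rcases le_or_gt x c with h3 | h3 <;> rcases le_or_gt y c with h4 | h4
    · rw [if_neg (not_le.2 h1), if_pos h3, if_neg (not_le.2 h2), if_pos h4]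
      have : (x - m) * (d - m) / (c - m) < (y - m) * (d - m) / (c - m) := by
        rw [div_lt_div_iff₀ hcm hcm]
        nlinarith [mul_pos (mul_pos (by linarith : (0:ℚ) < y - x) hdm) hcm]
      linarith
    · rw [if_neg (not_le.2 h1), if_pos h3, if_neg (not_le.2 h2), if_neg (not_le.2 h4)]
      have hx : (x - m) * (d - m) / (c - m) ≤ d - m := by
        rw [div_le_iff₀ hcm]; nlinarith
      linarith
    · linarith
    · rw [if_neg (not_le.2 h1), if_neg (not_le.2 h3), if_neg (not_le.2 h2), if_neg (not_le.2 h4)]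
      linarith

lemma pl_fix {m c d x : ℚ} (h : x ≤ m) : pl m c d x = x := if_pos h

lemma pl_map {m c d : ℚ} (hc : m < c) (hd : m < d) : pl m c d c = d := by
  unfold pl
  rw [if_neg (not_le.2 hc), if_pos le_rfl]
  have h : c - m ≠ 0 := by linarith
  field_simp
  ring

noncomputable def plPerm (m c d : ℚ) (hc : m < c) (hd : m < d) : Equiv.Perm ℚ :=
  ⟨pl m c d, pl m d c, fun x => pl_inv hc hd x, fun x => pl_inv hd hc x⟩

lemma plPerm_mem {m c d : ℚ} (hc : m < c) (hd : m < d) : plPerm m c d hc hd ∈ OP :=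
  pl_strictMono hc hd

lemma ext_aux : ∀ (k : ℕ) (a b : Fin k → ℚ), StrictMono a → StrictMono b →
    ∀ L : ℚ, (∀ i, L < a i) → (∀ i, L < b i) →
    ∃ f : OP, (∀ i, (f : Equiv.Perm ℚ) (a i) = b i) ∧ (∀ x ≤ L, (f : Equiv.Perm ℚ) x = x) := by
  intro k
  induction k with
  | zero =>
    intro a b _ _ L _ _
    exact ⟨1, fun i => i.elim0, fun x _ => rfl⟩
  | succ k ih =>
    intro a b ha hb L hLa hLb
    set a' : Fin k → ℚ := fun i => a i.castSucc with ha'def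
    set b' : Fin k → ℚ := fun i => b i.castSucc with hb'def
    have ha' : StrictMono a' := fun i j hij => ha (by simpa using hij)
    have hb' : StrictMono b' := fun i j hij => hb (by simpa using hij)
    obtain ⟨f₀, hf₀, hf₀fix⟩ := ih a' b' ha' hb' L (fun i => hLa _) (fun i => hLb _)
    set c : ℚ := (f₀ : Equiv.Perm ℚ) (a (Fin.last k)) with hcdef
    set d : ℚ := b (Fin.last k) with hddef
    set S : Finset ℚ := insert L (Finset.image b' Finset.univ) with hSdef
    have hSne : S.Nonempty := ⟨L, Finset.mem_insert_self _ _⟩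
    set m : ℚ := S.max' hSne with hmdef
    have hLm : L ≤ m := Finset.le_max' _ _ (Finset.mem_insert_self _ _)
    have hbm : ∀ i, b' i ≤ m := fun i =>
      Finset.le_max' _ _ (Finset.mem_insert_of_mem (Finset.mem_image_of_mem _ (Finset.mem_univ i)))
    have hfL : (f₀ : Equiv.Perm ℚ) L = L := hf₀fix L le_rfl
    have hmc : m < c := by
      rw [hmdef, Finset.max'_lt_iff]
      intro y hy
      rcases Finset.mem_insert.1 hy with rfl | hy
      · rw [hcdef, ← hfL]
        exact OP.strictMono f₀ (hLa _)
      · obtain ⟨i, _, rfl⟩ := Finset.mem_image.1 hy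
        rw [← hf₀ i]
        exact OP.strictMono f₀ (ha (Fin.castSucc_lt_last i))
    have hmd : m < d := by
      rw [hmdef, Finset.max'_lt_iff]
      intro y hy
      rcases Finset.mem_insert.1 hy with rfl | hy
      · exact hLb _
      · obtain ⟨i, _, rfl⟩ := Finset.mem_image.1 hy
        exact hb (Fin.castSucc_lt_last i)
    refine ⟨⟨plPerm m c d hmc hmd, plPerm_mem hmc hmd⟩ * f₀, ?_, ?_⟩
    · intro i
      induction i using Fin.lastCases with
      | last =>
        show plPerm m c d hmc hmd ((f₀ : Equiv.Perm ℚ) (a (Fin.last k))) = _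
        rw [← hcdef]
        exact pl_map hmc hmd
      | cast j =>
        show plPerm m c d hmc hmd ((f₀ : Equiv.Perm ℚ) (a j.castSucc)) = _
        rw [hf₀ j]
        exact pl_fix (hbm j)
    · intro x hx
      show plPerm m c d hmc hmd ((f₀ : Equiv.Perm ℚ) x) = x
      rw [hf₀fix x hx]
      exact pl_fix (le_trans hx hLm)

lemma ext_lemma (k : ℕ) (a b : Fin k → ℚ) (ha : StrictMono a) (hb : StrictMono b) :
    ∃ f : OP, ∀ i, (f : Equiv.Perm ℚ) (a i) = b i := by
  cases k with
  | zero => exact ⟨1, fun i => i.elim0⟩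
  | succ k =>
    obtain ⟨f, hf, -⟩ := ext_aux (k+1) a b ha hb (min (a 0) (b 0) - 1)
      (fun i => lt_of_lt_of_le (by linarith [min_le_left (a 0) (b 0)])
        (ha.monotone (Fin.zero_le i)))
      (fun i => lt_of_lt_of_le (by linarith [min_le_right (a 0) (b 0)])
        (hb.monotone (Fin.zero_le i)))
    exact ⟨f, hf⟩

def app2 {k : ℕ} (a b : Fin k → ℚ) : Fin (k+k) → ℚ :=
  fun i => if h : (i:ℕ) < k then a ⟨i, h⟩ else b ⟨(i:ℕ) - k, by omega⟩

lemma app2_left {k : ℕ} (a b : Fin k → ℚ) (i : Fin k) :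
    app2 a b ⟨i.val, by omega⟩ = a i := by
  simp [app2, i.isLt]

lemma app2_right {k : ℕ} (a b : Fin k → ℚ) (i : Fin k) :
    app2 a b ⟨k + i.val, by omega⟩ = b i := by
  have h : ¬ (k + i.val < k) := by omega
  have h2 : k + i.val - k = i.val := by omega
  simp only [app2, dif_neg h]
  congr 1
  exact Fin.ext h2

lemma app2_strictMono {k : ℕ} {a b : Fin k → ℚ} (ha : StrictMono a) (hb : StrictMono b)
    (hab : ∀ i j, a i < b j) : StrictMono (app2 a b) := by
  intro i j hij
  have hij' : (i:ℕ) < (j:ℕ) := hij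
  unfold app2
  by_cases hi : (i:ℕ) < k <;> by_cases hj : (j:ℕ) < k
  · rw [dif_pos hi, dif_pos hj]
    exact ha (show ((⟨i, hi⟩ : Fin k)) < ⟨j, hj⟩ from hij')
  · rw [dif_pos hi, dif_neg hj]
    exact hab _ _
  · omega
  · rw [dif_neg hi, dif_neg hj]
    exact hb (show ((⟨(i:ℕ)-k, by omega⟩ : Fin k)) < ⟨(j:ℕ)-k, by omega⟩ from by
      simp only [Fin.mk_lt_mk]; omega)

open Pointwise in
lemma core (g : ↥OP) (hg : g ≠ 1) (σ : ↥OP) (F : Finset ℚ) :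
    ∃ s : ↥OP, s ∈ pmConj g * pmConj g ∧
      ∀ x ∈ F, (s : Equiv.Perm ℚ) x = (σ : Equiv.Perm ℚ) x := by
  classical
  -- a displaced point
  have hq : ∃ q : ℚ, (g : Equiv.Perm ℚ) q ≠ q := by
    by_contra h
    push_neg at h
    exact hg (Subtype.ext (Equiv.ext fun x => by simpa using h x))
  obtain ⟨q, hq⟩ := hq
  -- normalize so that q < g₀ q
  obtain ⟨g₀, hq0, hmem1, hmem2⟩ :
      ∃ g₀ : ↥OP, q < (g₀ : Equiv.Perm ℚ) q ∧
        (∀ h : ↥OP, h * g₀ * h⁻¹ ∈ pmConj g) ∧ (∀ h : ↥OP, h * g₀⁻¹ * h⁻¹ ∈ pmConj g) := by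
    rcases lt_or_gt_of_ne hq with hlt | hlt
    · refine ⟨g⁻¹, ?_, fun h => Or.inr ⟨h, rfl⟩, fun h => Or.inl ⟨h, by rw [inv_inv]⟩⟩
      have := OP.strictMono g⁻¹ hlt
      simpa using this
    · exact ⟨g, hlt, fun h => Or.inl ⟨h, rfl⟩, fun h => Or.inr ⟨h, rfl⟩⟩
  rcases F.eq_empty_or_nonempty with rfl | hFne
  · refine ⟨(1 * g₀⁻¹ * 1⁻¹) * (1 * g₀ * 1⁻¹), Set.mul_mem_mul (hmem2 1) (hmem1 1), ?_⟩
    intro x hx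
    exact absurd hx (Finset.notMem_empty x)
  -- nonempty case
  obtain ⟨k', hk'⟩ : ∃ k', F.card = k' + 1 :=
    Nat.exists_eq_succ_of_ne_zero (Finset.card_ne_zero_of_mem hFne.choose_spec)
  set k := k' + 1 with hkdef
  have hcard : F.card = k := hk'
  -- enumerate F in increasing order
  set X : Fin k → ℚ := fun i => (F.orderIsoOfFin hcard i : ℚ) with hXdef
  have hXmono : StrictMono X := fun i j hij => by
    exact_mod_cast (F.orderIsoOfFin hcard).strictMono hij
  have hXmem : ∀ x ∈ F, ∃ i, X i = x := by
    intro x hx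
    obtain ⟨i, hi⟩ := (F.orderIsoOfFin hcard).surjective ⟨x, hx⟩
    exact ⟨i, by simp only [hXdef, hi]⟩
  set Y : Fin k → ℚ := fun i => (σ : Equiv.Perm ℚ) (X i) with hYdef
  have hYmono : StrictMono Y := fun i j hij => OP.strictMono σ (hXmono hij)
  -- upper bound
  set M : ℚ := max (X (Fin.last k')) (Y (Fin.last k')) + 1 with hMdef
  have hXM : ∀ i, X i < M := fun i =>
    lt_of_le_of_lt (hXmono.monotone (Fin.le_last i))
      (by rw [hMdef]; have := le_max_left (X (Fin.last k')) (Y (Fin.last k')); linarith)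
  have hYM : ∀ i, Y i < M := fun i =>
    lt_of_le_of_lt (hYmono.monotone (Fin.le_last i))
      (by rw [hMdef]; have := le_max_right (X (Fin.last k')) (Y (Fin.last k')); linarith)
  set T : Fin k → ℚ := fun i => M + (i : ℕ) + 1 with hTdef
  have hTmono : StrictMono T := fun i j hij => by
    have : ((i:ℕ):ℚ) < ((j:ℕ):ℚ) := by exact_mod_cast hij
    rw [hTdef]; dsimp only; linarith
  have hXT : ∀ i j, X i < T j := fun i j => by
    have h1 := hXM i
    have h2 : (0:ℚ) ≤ ((j:ℕ):ℚ) := by positivity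
    rw [hTdef]; dsimp only; linarith
  have hYT : ∀ i j, Y i < T j := fun i j => by
    have h1 := hYM i
    have h2 : (0:ℚ) ≤ ((j:ℕ):ℚ) := by positivity
    rw [hTdef]; dsimp only; linarith
  -- points inside (q, g₀ q)
  set δ : ℚ := (g₀ : Equiv.Perm ℚ) q - q with hδdef
  have hδ : 0 < δ := by rw [hδdef]; linarith
  set u : Fin k → ℚ := fun i => q + δ * ((i:ℕ) + 1) / ((k:ℕ) + 1) with hudef
  have humono : StrictMono u := by
    intro i j hij
    have hij' : ((i:ℕ):ℚ) < ((j:ℕ):ℚ) := by exact_mod_cast hij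
    rw [hudef]; dsimp only
    have hk : (0:ℚ) < ((k:ℕ):ℚ) + 1 := by positivity
    have h2 : δ * ((i:ℕ) + 1) / ((k:ℕ) + 1) < δ * ((j:ℕ) + 1) / ((k:ℕ) + 1) := by
      rw [div_lt_div_iff₀ hk hk]
      nlinarith [mul_pos (mul_pos hδ (sub_pos.2 hij')) hk]
    linarith
  have hqu : ∀ i, q < u i := by
    intro i
    have hk : (0:ℚ) < ((k:ℕ):ℚ) + 1 := by positivity
    have : 0 < δ * ((i:ℕ) + 1) / ((k:ℕ) + 1) :=
      div_pos (mul_pos hδ (by positivity)) hk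
    rw [hudef]; dsimp only; linarith
  have hugq : ∀ i, u i < (g₀ : Equiv.Perm ℚ) q := by
    intro i
    have hk : (0:ℚ) < ((k:ℕ):ℚ) + 1 := by positivity
    have hik : ((i:ℕ):ℚ) + 1 < ((k:ℕ):ℚ) + 1 := by
      have : (i:ℕ) < k := i.isLt
      exact_mod_cast Nat.succ_lt_succ this
    have : δ * ((i:ℕ) + 1) / ((k:ℕ) + 1) < δ := by
      rw [div_lt_iff₀ hk]; nlinarith
    rw [hudef]; dsimp only; rw [hδdef] at this; linarith
  set v : Fin k → ℚ := fun i => (g₀ : Equiv.Perm ℚ) (u i) with hvdef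
  have hvmono : StrictMono v := fun i j hij => OP.strictMono g₀ (humono hij)
  have huv : ∀ i j, u i < v j := by
    intro i j
    have h1 : (g₀ : Equiv.Perm ℚ) q < v j := OP.strictMono g₀ (hqu j)
    exact lt_trans (hugq i) h1
  -- conjugators
  obtain ⟨h₁, hh₁⟩ := ext_lemma (k+k) (app2 u v) (app2 X T)
    (app2_strictMono humono hvmono huv) (app2_strictMono hXmono hTmono hXT)
  obtain ⟨h₂, hh₂⟩ := ext_lemma (k+k) (app2 u v) (app2 Y T)
    (app2_strictMono humono hvmono huv) (app2_strictMono hYmono hTmono hYT)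
  have hh₁u : ∀ i, (h₁ : Equiv.Perm ℚ) (u i) = X i := fun i => by
    have := hh₁ ⟨i.val, by omega⟩
    rwa [app2_left, app2_left] at this
  have hh₁v : ∀ i, (h₁ : Equiv.Perm ℚ) (v i) = T i := fun i => by
    have := hh₁ ⟨k + i.val, by omega⟩
    rwa [app2_right, app2_right] at this
  have hh₂u : ∀ i, (h₂ : Equiv.Perm ℚ) (u i) = Y i := fun i => by
    have := hh₂ ⟨i.val, by omega⟩
    rwa [app2_left, app2_left] at this
  have hh₂v : ∀ i, (h₂ : Equiv.Perm ℚ) (v i) = T i := fun i => by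
    have := hh₂ ⟨k + i.val, by omega⟩
    rwa [app2_right, app2_right] at this
  refine ⟨(h₂ * g₀⁻¹ * h₂⁻¹) * (h₁ * g₀ * h₁⁻¹),
    Set.mul_mem_mul (hmem2 h₂) (hmem1 h₁), ?_⟩
  intro x hx
  obtain ⟨i, rfl⟩ := hXmem x hx
  have e1 : ((h₁⁻¹ : ↥OP) : Equiv.Perm ℚ) (X i) = u i := by
    rw [← hh₁u i]
    simp
  have e2 : ((h₂⁻¹ : ↥OP) : Equiv.Perm ℚ) (T i) = v i := by
    rw [← hh₂v i]
    simp
  have e3 : ((g₀⁻¹ : ↥OP) : Equiv.Perm ℚ) (v i) = u i := by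
    rw [hvdef]
    simp
  simp only [Subgroup.coe_mul, Equiv.Perm.mul_apply, e1]
  rw [show (g₀ : Equiv.Perm ℚ) (u i) = v i from rfl, hh₁v i, e2, e3, hh₂u i]

noncomputable def eQ : ℚ ≃ ℕ := Denumerable.eqv ℚ

noncomputable def jmap : ↥OP → (ℕ → ℕ × ℕ) := fun g n =>
  (eQ ((g : Equiv.Perm ℚ) (eQ.symm n)), eQ (((g : Equiv.Perm ℚ))⁻¹ (eQ.symm n)))

lemma jmap_injective : Function.Injective jmap := by
  intro g h hgh
  apply Subtype.ext
  apply Equiv.ext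
  intro x
  have := congrFun hgh (eQ x)
  have h1 := congrArg Prod.fst this
  simp only [jmap, Equiv.symm_apply_apply] at h1
  exact eQ.injective h1

noncomputable instance OPtop : TopologicalSpace ↥OP :=
  TopologicalSpace.induced jmap inferInstance

lemma jmap_range : Set.range jmap =
    {w : ℕ → ℕ × ℕ | (∀ n m, (w n).1 = m → (w m).2 = n) ∧ (∀ n m, (w n).2 = m → (w m).1 = n) ∧
      (∀ n m, eQ.symm n ≤ eQ.symm m → eQ.symm ((w n).1) ≤ eQ.symm ((w m).1))} := by
  ext w
  constructor
  · rintro ⟨g, rfl⟩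
    refine ⟨?_, ?_, ?_⟩
    · rintro n m rfl
      simp [jmap]
    · rintro n m rfl
      simp [jmap]
    · intro n m hnm
      simp only [jmap, Equiv.symm_apply_apply]
      rcases eq_or_lt_of_le hnm with h | h
      · rw [h]
      · exact (OP.strictMono g h).le
  · rintro ⟨h1, h2, h3⟩
    set p : ℚ → ℚ := fun x => eQ.symm ((w (eQ x)).1) with hpdef
    set r : ℚ → ℚ := fun x => eQ.symm ((w (eQ x)).2) with hrdef
    have hrp : ∀ x, r (p x) = x := by
      intro x
      have := h1 (eQ x) ((w (eQ x)).1) rfl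
      simp only [hpdef, hrdef, Equiv.apply_symm_apply, this, Equiv.symm_apply_apply]
    have hpr : ∀ x, p (r x) = x := by
      intro x
      have := h2 (eQ x) ((w (eQ x)).2) rfl
      simp only [hpdef, hrdef, Equiv.apply_symm_apply, this, Equiv.symm_apply_apply]
    set gE : Equiv.Perm ℚ := ⟨p, r, hrp, hpr⟩ with hgEdef
    have hmono : Monotone p := by
      intro x y hxy
      have := h3 (eQ x) (eQ y) (by simpa using hxy)
      simpa [hpdef] using this
    have hsm : StrictMono ⇑gE := hmono.strictMono_of_injective gE.injective
    refine ⟨⟨gE, hsm⟩, ?_⟩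
    funext n
    have hfst : eQ (p (eQ.symm n)) = (w n).1 := by simp [hpdef]
    have hsnd : eQ (r (eQ.symm n)) = (w n).2 := by simp [hrdef]
    simp only [jmap]
    ext
    · exact hfst
    · show eQ ((gE)⁻¹ (eQ.symm n)) = (w n).2
      rw [show (gE)⁻¹ (eQ.symm n) = r (eQ.symm n) from rfl]
      exact hsnd

lemma closed_pair (P : (ℕ×ℕ) → (ℕ×ℕ) → Prop) (n m : ℕ) :
    IsClosed {w : ℕ → ℕ × ℕ | P (w n) (w m)} := by
  have h : {w : ℕ → ℕ × ℕ | P (w n) (w m)} =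
      (fun w : ℕ → ℕ × ℕ => (w n, w m)) ⁻¹' {p | P p.1 p.2} := rfl
  rw [h]
  exact IsClosed.preimage ((continuous_apply n).prodMk (continuous_apply m))
    (isClosed_discrete _)

lemma closed_forall (P : (ℕ×ℕ) → (ℕ×ℕ) → ℕ → ℕ → Prop) :
    IsClosed {w : ℕ → ℕ × ℕ | ∀ n m, P (w n) (w m) n m} := by
  have h : {w : ℕ → ℕ × ℕ | ∀ n m, P (w n) (w m) n m} =
      ⋂ (n : ℕ) (m : ℕ), {w : ℕ → ℕ × ℕ | P (w n) (w m) n m} := by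
    ext w; simp
  rw [h]
  exact isClosed_iInter fun n => isClosed_iInter fun m => closed_pair (fun a b => P a b n m) n m

lemma jmap_range_closed : IsClosed (Set.range jmap) := by
  rw [jmap_range]
  have h : {w : ℕ → ℕ × ℕ | (∀ n m, (w n).1 = m → (w m).2 = n) ∧
      (∀ n m, (w n).2 = m → (w m).1 = n) ∧
      (∀ n m, eQ.symm n ≤ eQ.symm m → eQ.symm ((w n).1) ≤ eQ.symm ((w m).1))} =
      {w : ℕ → ℕ × ℕ | ∀ n m, (w n).1 = m → (w m).2 = n} ∩
      ({w : ℕ → ℕ × ℕ | ∀ n m, (w n).2 = m → (w m).1 = n} ∩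
       {w : ℕ → ℕ × ℕ | ∀ n m, eQ.symm n ≤ eQ.symm m →
          eQ.symm ((w n).1) ≤ eQ.symm ((w m).1)}) := by
    ext w; simp [Set.mem_inter_iff, and_assoc]
  rw [h]
  refine IsClosed.inter ?_ (IsClosed.inter ?_ ?_)
  · exact closed_forall (fun a b n m => a.1 = m → b.2 = n)
  · exact closed_forall (fun a b n m => a.2 = m → b.1 = n)
  · exact closed_forall (fun a b n m => eQ.symm n ≤ eQ.symm m → eQ.symm a.1 ≤ eQ.symm b.1)

lemma jmap_closedEmbedding : Topology.IsClosedEmbedding jmap :=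
  ⟨⟨⟨rfl⟩, jmap_injective⟩, jmap_range_closed⟩


noncomputable instance OPpolish : PolishSpace ↥OP := jmap_closedEmbedding.polishSpace

lemma jmap_continuous : Continuous jmap := continuous_induced_dom

lemma coe_inv_apply (g : ↥OP) (x : ℚ) :
    ((g⁻¹ : ↥OP) : Equiv.Perm ℚ) x = ((g : Equiv.Perm ℚ))⁻¹ x := by
  simp

instance OPcontmul : ContinuousMul ↥OP := by
  constructor
  ·
    apply continuous_induced_rng.2
    apply continuous_pi
    intro n
    rw [continuous_iff_continuousAt]
    intro p₀
    set m₀ := (jmap p₀.2 n).1 with hm₀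
    set c₁ := (jmap p₀.1 m₀).1 with hc₁
    set m₁ := (jmap p₀.1 n).2 with hm₁
    set c₂ := (jmap p₀.2 m₁).2 with hc₂
    have hUopen : IsOpen {p : ↥OP × ↥OP | (jmap p.2 n).1 = m₀ ∧ (jmap p.1 m₀).1 = c₁ ∧
        (jmap p.1 n).2 = m₁ ∧ (jmap p.2 m₁).2 = c₂} := by
      have k1 : Continuous fun p : ↥OP × ↥OP => (jmap p.2 n).1 :=
        ((continuous_apply n).comp (jmap_continuous.comp continuous_snd)).fst
      have k2 : Continuous fun p : ↥OP × ↥OP => (jmap p.1 m₀).1 :=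
        ((continuous_apply m₀).comp (jmap_continuous.comp continuous_fst)).fst
      have k3 : Continuous fun p : ↥OP × ↥OP => (jmap p.1 n).2 :=
        ((continuous_apply n).comp (jmap_continuous.comp continuous_fst)).snd
      have k4 : Continuous fun p : ↥OP × ↥OP => (jmap p.2 m₁).2 :=
        ((continuous_apply m₁).comp (jmap_continuous.comp continuous_snd)).snd
      have hset : {p : ↥OP × ↥OP | (jmap p.2 n).1 = m₀ ∧ (jmap p.1 m₀).1 = c₁ ∧
          (jmap p.1 n).2 = m₁ ∧ (jmap p.2 m₁).2 = c₂} =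
          ((fun p : ↥OP × ↥OP => (jmap p.2 n).1) ⁻¹' {m₀}) ∩
          (((fun p : ↥OP × ↥OP => (jmap p.1 m₀).1) ⁻¹' {c₁}) ∩
          (((fun p : ↥OP × ↥OP => (jmap p.1 n).2) ⁻¹' {m₁}) ∩
          ((fun p : ↥OP × ↥OP => (jmap p.2 m₁).2) ⁻¹' {c₂}))) := by
        ext p; simp [and_assoc]
      rw [hset]
      exact (k1.isOpen_preimage _ (isOpen_discrete _)).inter
        ((k2.isOpen_preimage _ (isOpen_discrete _)).inter
        ((k3.isOpen_preimage _ (isOpen_discrete _)).inter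
        (k4.isOpen_preimage _ (isOpen_discrete _))))
    have hp₀ : p₀ ∈ {p : ↥OP × ↥OP | (jmap p.2 n).1 = m₀ ∧ (jmap p.1 m₀).1 = c₁ ∧
        (jmap p.1 n).2 = m₁ ∧ (jmap p.2 m₁).2 = c₂} := ⟨rfl, rfl, rfl, rfl⟩
    have hval : ∀ p ∈ {p : ↥OP × ↥OP | (jmap p.2 n).1 = m₀ ∧ (jmap p.1 m₀).1 = c₁ ∧
        (jmap p.1 n).2 = m₁ ∧ (jmap p.2 m₁).2 = c₂}, jmap (p.1 * p.2) n = (c₁, c₂) := by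
      rintro ⟨a, b⟩ ⟨h1, h2, h3, h4⟩
      have e1 : (b : Equiv.Perm ℚ) (eQ.symm n) = eQ.symm m₀ := by
        simp only [jmap] at h1
        rw [← h1, Equiv.symm_apply_apply]
      have e2 : ((a : Equiv.Perm ℚ))⁻¹ (eQ.symm n) = eQ.symm m₁ := by
        simp only [jmap] at h3
        rw [← h3, Equiv.symm_apply_apply]
      simp only [jmap, Subgroup.coe_mul, mul_inv_rev, Equiv.Perm.mul_apply] at *
      rw [e1, e2, h2, h4]
    apply Filter.EventuallyEq.continuousAt (y := (c₁, c₂))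
    filter_upwards [hUopen.mem_nhds hp₀] with p hp
    exact hval p hp

instance OPcontinv : ContinuousInv ↥OP := by
  constructor
  · apply continuous_induced_rng.2
    have hcomp : (jmap ∘ fun g : ↥OP => g⁻¹) =
        (fun w : ℕ → ℕ × ℕ => fun n => ((w n).2, (w n).1)) ∘ jmap := by
      funext g n
      simp [jmap]
    rw [hcomp]
    exact (continuous_pi fun n =>
      ((continuous_apply n).snd.prodMk (continuous_apply n).fst)).comp jmap_continuous

instance OPtopgrp : IsTopologicalGroup ↥OP := ⟨⟩

lemma dense_pm (g : ↥OP) (hg : g ≠ 1) : Dense (pmConj g * pmConj g) := by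
  rw [dense_iff_inter_open]
  rintro U hU ⟨σ, hσ⟩
  obtain ⟨V, hV, rfl⟩ := isOpen_induced_iff.1 hU
  obtain ⟨I, u, h1, h2⟩ := isOpen_pi_iff.1 hV (jmap σ) hσ
  classical
  set F : Finset ℚ := I.image (fun n => eQ.symm n) ∪
    I.image (fun n => ((σ : Equiv.Perm ℚ))⁻¹ (eQ.symm n)) with hFdef
  obtain ⟨s, hs, hagree⟩ := core g hg σ F
  refine ⟨s, ?_, hs⟩
  show jmap s ∈ V
  apply h2
  intro i hi
  have hxF : eQ.symm i ∈ F := Finset.mem_union_left _ (Finset.mem_image_of_mem _ hi)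
  have hyF : ((σ : Equiv.Perm ℚ))⁻¹ (eQ.symm i) ∈ F :=
    Finset.mem_union_right _ (Finset.mem_image_of_mem _ hi)
  have hfst : (s : Equiv.Perm ℚ) (eQ.symm i) = (σ : Equiv.Perm ℚ) (eQ.symm i) :=
    hagree _ hxF
  have hsnd : ((s : Equiv.Perm ℚ))⁻¹ (eQ.symm i) = ((σ : Equiv.Perm ℚ))⁻¹ (eQ.symm i) := by
    have h3 : (s : Equiv.Perm ℚ) (((σ : Equiv.Perm ℚ))⁻¹ (eQ.symm i)) = eQ.symm i := by
      rw [hagree _ hyF]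
      simp
    have h4 := congrArg (fun y => ((s : Equiv.Perm ℚ))⁻¹ y) h3
    simp only [← Equiv.Perm.mul_apply, inv_mul_cancel_left, inv_mul_cancel, Equiv.Perm.one_apply] at h4
    exact h4.symm
  have : jmap s i = jmap σ i := by
    simp only [jmap, hfst, hsnd]
  rw [this]
  exact (h1 i hi).2

lemma pl_top {m c d x : ℚ} (hm : m < c) (h : c < x) : pl m c d x = x + (d - c) := by
  unfold pl
  rw [if_neg (not_le.2 (lt_trans hm h)), if_neg (not_le.2 h)]

/-- The bump function: a nontrivial order automorphism of ℚ supported in [0,4]. -/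
noncomputable def bump : ↥OP :=
  ⟨plPerm 2 4 3 (by norm_num) (by norm_num), plPerm_mem _ _⟩ *
  ⟨plPerm 0 1 2 (by norm_num) (by norm_num), plPerm_mem _ _⟩

lemma bump_low {x : ℚ} (hx : x ≤ 0) : (bump : Equiv.Perm ℚ) x = x := by
  show pl 2 4 3 (pl 0 1 2 x) = x
  rw [pl_fix hx, pl_fix (le_trans hx (by norm_num))]

lemma bump_high {x : ℚ} (hx : 4 ≤ x) : (bump : Equiv.Perm ℚ) x = x := by
  show pl 2 4 3 (pl 0 1 2 x) = x
  rw [pl_top (by norm_num) (by linarith : (1:ℚ) < x), pl_top (by norm_num) (by linarith)]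
  ring

lemma bump_half : (bump : Equiv.Perm ℚ) (1/2) = 1 := by
  show pl 2 4 3 (pl 0 1 2 (1/2)) = 1
  have h1 : pl 0 1 2 (1/2) = 1 := by
    unfold pl
    rw [if_neg (by norm_num), if_pos (by norm_num)]
    norm_num
  rw [h1, pl_fix (by norm_num)]

/-- Subgroup of boundedly supported order automorphisms. -/
def BddSupp : Subgroup ↥OP where
  carrier := {f | ∃ a b : ℚ, (∀ x, x ≤ a → (f : Equiv.Perm ℚ) x = x) ∧
    (∀ x, b ≤ x → (f : Equiv.Perm ℚ) x = x)}
  one_mem' := ⟨0, 0, fun x _ => rfl, fun x _ => rfl⟩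
  mul_mem' := by
    rintro f g ⟨a1, b1, hf1, hf2⟩ ⟨a2, b2, hg1, hg2⟩
    refine ⟨min a1 a2, max b1 b2, ?_, ?_⟩
    · intro x hx
      simp only [Subgroup.coe_mul, Equiv.Perm.mul_apply]
      rw [hg1 x (le_trans hx (min_le_right _ _)), hf1 x (le_trans hx (min_le_left _ _))]
    · intro x hx
      simp only [Subgroup.coe_mul, Equiv.Perm.mul_apply]
      rw [hg2 x (le_trans (le_max_right _ _) hx), hf2 x (le_trans (le_max_left _ _) hx)]
  inv_mem' := by
    rintro f ⟨a, b, h1, h2⟩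
    refine ⟨a, b, ?_, ?_⟩
    · intro x hx
      have := h1 x hx
      conv_lhs => rw [← this]
      simp
    · intro x hx
      have := h2 x hx
      conv_lhs => rw [← this]
      simp

lemma BddSupp_normal : BddSupp.Normal := by
  constructor
  rintro f ⟨a, b, h1, h2⟩ h
  refine ⟨(h : Equiv.Perm ℚ) a, (h : Equiv.Perm ℚ) b, ?_, ?_⟩
  · intro x hx
    simp only [Subgroup.coe_mul, Equiv.Perm.mul_apply]
    have hle : ((h : Equiv.Perm ℚ))⁻¹ x ≤ a := by
      by_contra hcon
      push_neg at hcon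
      have := OP.strictMono h hcon
      simp only [← Equiv.Perm.mul_apply, mul_inv_cancel, Equiv.Perm.one_apply] at this
      exact absurd hx (not_le.2 this)
    rw [coe_inv_apply, h1 _ hle]
    simp
  · intro x hx
    simp only [Subgroup.coe_mul, Equiv.Perm.mul_apply]
    have hle : b ≤ ((h : Equiv.Perm ℚ))⁻¹ x := by
      by_contra hcon
      push_neg at hcon
      have := OP.strictMono h hcon
      simp only [← Equiv.Perm.mul_apply, mul_inv_cancel, Equiv.Perm.one_apply] at this
      exact absurd hx (not_le.2 this)
    rw [coe_inv_apply, h2 _ hle]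
    simp

lemma bump_mem : bump ∈ BddSupp :=
  ⟨0, 4, fun x hx => bump_low hx, fun x hx => bump_high hx⟩

lemma bump_ne_one : bump ≠ 1 := by
  intro h
  have := bump_half
  rw [h] at this
  norm_num at this

def trQ : ↥OP := ⟨Equiv.addRight (1 : ℚ), fun x y hxy => by simpa using hxy⟩

lemma trQ_not_mem : trQ ∉ BddSupp := by
  rintro ⟨a, b, h1, h2⟩
  have := h2 b le_rfl
  simp only [trQ] at this
  change b + 1 = b at this
  linarith

lemma BddSupp_ne_bot : BddSupp ≠ ⊥ := by
  intro h
  have := bump_mem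
  rw [h, Subgroup.mem_bot] at this
  exact bump_ne_one this

lemma BddSupp_ne_top : BddSupp ≠ ⊤ := by
  intro h
  exact trQ_not_mem (h ▸ Subgroup.mem_top trQ)

/-- There exists a Polish group with topological bounded normal generation which is not
simple (in particular, TBNG does not imply BNG). -/
theorem stmt_14 :
    ∃ (G : Type) (_ : Group G) (_ : TopologicalSpace G),
      IsTopologicalGroup G ∧ PolishSpace G ∧
      (∀ g : G, g ≠ 1 → ∃ n : ℕ, 1 ≤ n ∧ closure (pmConj g ^ n) = (Set.univ : Set G)) ∧
      (∃ N : Subgroup G, N.Normal ∧ N ≠ ⊥ ∧ N ≠ ⊤) := by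
  refine ⟨↥OP, inferInstance, OPtop, OPtopgrp, OPpolish, ?_, BddSupp, BddSupp_normal,
    BddSupp_ne_bot, BddSupp_ne_top⟩
  intro g hg
  refine ⟨2, by norm_num, ?_⟩
  rw [pow_two]
  exact (dense_pm g hg).closure_eq
end
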